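/- arXiv:1403.2195 — 8 statements merged into one kernel-verified Lean document; each statement's English description precedes it below -/
import Mathlib

section
/- For n = 2^k with k ∈ ℕ, any a > 0, and any y > 0, the L_n-transform of x ↦ J₀(2 a^{n/2} x^{n/2}) satisfies ∫₀^∞ x^{n−1} exp(−x^n y^n) J₀(2 a^{n/2} x^{n/2}) dx = (1/(n y^n)) exp(−a^n/y^n), where J₀ is given by its power series, so that J₀(2 a^{n/2} x^{n/2}) = ∑_{m=0}^∞ (−1)^m (a x)^{m n}/(m!)². -/
open MeasureTheory Set Real

lemma aux_integral (n m : ℕ) (hn : 1 ≤ n) {c : ℝ} (hc : 0 < c) :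
    ∫ x in Ioi (0:ℝ), x ^ (n - 1 + m * n) * Real.exp (-(c * x ^ n))
      = m.factorial / (n * c ^ (m + 1)) := by
  have hn0 : (n:ℝ) ≠ 0 := by positivity
  have h1 : ∫ x in Ioi (0:ℝ), x ^ (n - 1 + m * n) * Real.exp (-(c * x ^ n))
      = ∫ x in Ioi (0:ℝ), x ^ ((n - 1 + m * n : ℕ) : ℝ) * Real.exp (-c * x ^ (n:ℝ)) := by
    refine setIntegral_congr_fun measurableSet_Ioi (fun x hx => ?_)
    rw [rpow_natCast, rpow_natCast, neg_mul]
  have hq : ((n - 1 + m * n : ℕ) : ℝ) = (n:ℝ) - 1 + m * n := by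
    push_cast [Nat.cast_sub hn]
    ring
  have hq1 : (((n - 1 + m * n : ℕ) : ℝ) + 1) / (n:ℝ) = (m:ℝ) + 1 := by
    rw [hq]; field_simp; ring
  have hqpos : (-1:ℝ) < ((n - 1 + m * n : ℕ) : ℝ) := by
    have h1 : (1:ℝ) ≤ (n:ℝ) := by exact_mod_cast hn
    have h2 : (0:ℝ) ≤ (m:ℝ) * (n:ℝ) := by positivity
    rw [hq]; linarith
  rw [h1, integral_rpow_mul_exp_neg_mul_rpow (by positivity) hqpos hc, hq1,
    Real.Gamma_nat_eq_factorial,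
    show (-(((n - 1 + m * n : ℕ) : ℝ) + 1) / (n:ℝ)) = -((m+1 : ℕ):ℝ) by
      rw [neg_div, hq1]; push_cast; ring,
    Real.rpow_neg hc.le, Real.rpow_natCast]
  field_simp

lemma aux_integrable (n m : ℕ) (hn : 1 ≤ n) {c : ℝ} (hc : 0 < c) :
    IntegrableOn (fun x : ℝ => x ^ (n - 1 + m * n) * Real.exp (-(c * x ^ n))) (Ioi 0) := by
  have hqpos : (-1:ℝ) < ((n - 1 + m * n : ℕ) : ℝ) := by
    have h2 : (0:ℝ) ≤ ((n - 1 + m * n : ℕ) : ℝ) := Nat.cast_nonneg _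
    linarith
  have hp : (1:ℝ) ≤ (n:ℝ) := by exact_mod_cast hn
  exact (integrableOn_rpow_mul_exp_neg_mul_rpow hqpos (by linarith : (0:ℝ) < (n:ℝ)) hc).congr_fun
    (fun x hx => by dsimp only; rw [Real.rpow_natCast, Real.rpow_natCast, neg_mul]) measurableSet_Ioi

/-- For `n = 2^k`, `a > 0` and `y > 0`,
`Lₙ{J₀(2 a^{n/2} x^{n/2}); y} = (1/(n yⁿ)) exp(-aⁿ/yⁿ)`, where `J₀` is given by its
power series, so that `J₀(2 a^{n/2} x^{n/2}) = ∑ₘ (-1)^m (a x)^{m n}/(m!)²`. -/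
theorem Ln_besselJ_zero (k n : ℕ) (hn : n = 2 ^ k) (a y : ℝ) (ha : 0 < a) (hy : 0 < y) :
    ∫ x in Ioi (0 : ℝ), x ^ (n - 1) * Real.exp (-(x ^ n * y ^ n)) *
        (∑' m : ℕ, (-1 : ℝ) ^ m * (a * x) ^ (m * n) / ((m.factorial : ℝ)) ^ 2)
      = (1 / (n * y ^ n)) * Real.exp (-(a ^ n / y ^ n)) := by
  have hn1 : 1 ≤ n := by rw [hn]; exact Nat.one_le_two_pow
  have hc : (0:ℝ) < y ^ n := pow_pos hy n
  have hnR : (0:ℝ) < n := by exact_mod_cast hn1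
  set c : ℝ := y ^ n with hcdef
  set F : ℕ → ℝ → ℝ := fun m x => x ^ (n - 1) * Real.exp (-(x ^ n * c)) *
      ((-1 : ℝ) ^ m * (a * x) ^ (m * n) / ((m.factorial : ℝ)) ^ 2) with hFdef
  have hfact : ∀ m : ℕ, (0:ℝ) < (m.factorial : ℝ) := fun m => by exact_mod_cast m.factorial_pos
  have hFeq : ∀ m : ℕ, ∀ x ∈ Ioi (0:ℝ), F m x
      = ((-1 : ℝ) ^ m * a ^ (m * n) / ((m.factorial : ℝ)) ^ 2)
        * (x ^ (n - 1 + m * n) * Real.exp (-(c * x ^ n))) := by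
    intro m x hx
    simp only [hFdef]
    rw [mul_pow, pow_add, mul_comm (x ^ n) c]
    ring
  have hInt : ∀ m : ℕ, IntegrableOn (F m) (Ioi 0) := fun m =>
    IntegrableOn.congr_fun ((aux_integrable n m hn1 hc).const_mul _)
      (fun x hx => (hFeq m x hx).symm) measurableSet_Ioi
  have habs : ∀ m : ℕ, |(-1 : ℝ) ^ m * a ^ (m * n) / ((m.factorial : ℝ)) ^ 2|
      = a ^ (m * n) / ((m.factorial : ℝ)) ^ 2 := by
    intro m
    rw [abs_div, abs_mul, abs_pow, abs_pow, abs_neg, abs_one, one_pow, one_mul,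
      abs_of_nonneg ha.le, abs_of_nonneg (by positivity : (0:ℝ) ≤ ((m.factorial : ℝ)) ^ 2)]
  have hnorm : ∀ m : ℕ, ∫ x in Ioi (0:ℝ), ‖F m x‖
      = (a ^ (m * n) / ((m.factorial : ℝ)) ^ 2) * ((m.factorial : ℝ) / (n * c ^ (m + 1))) := by
    intro m
    have h1 : ∫ x in Ioi (0:ℝ), ‖F m x‖
        = ∫ x in Ioi (0:ℝ), (a ^ (m * n) / ((m.factorial : ℝ)) ^ 2)
            * (x ^ (n - 1 + m * n) * Real.exp (-(c * x ^ n))) := by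
      refine setIntegral_congr_fun measurableSet_Ioi (fun x hx => ?_)
      have hx' : (0:ℝ) < x := hx
      rw [Real.norm_eq_abs, hFeq m x hx, abs_mul, habs m,
        abs_of_nonneg (by positivity : (0:ℝ) ≤ x ^ (n - 1 + m * n) * Real.exp (-(c * x ^ n)))]
    rw [h1, integral_const_mul, aux_integral n m hn1 hc]
  have hval : ∀ m : ℕ, ∫ x in Ioi (0:ℝ), F m x
      = (1 / (n * c)) * ((-(a ^ n / c)) ^ m / (m.factorial : ℝ)) := by
    intro m
    rw [setIntegral_congr_fun measurableSet_Ioi (hFeq m), integral_const_mul,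
      aux_integral n m hn1 hc,
      show (-(a ^ n / c)) ^ m = (-1 : ℝ) ^ m * a ^ (m * n) / c ^ m by
        rw [neg_pow, div_pow, ← pow_mul, mul_comm n m, mul_div_assoc]]
    have h0 := (hfact m).ne'
    field_simp
    ring
  have hsum : Summable (fun m : ℕ => ∫ x in Ioi (0:ℝ), ‖F m x‖) := by
    have h := (Real.summable_pow_div_factorial (a ^ n / c)).mul_left (1 / ((n:ℝ) * c))
    refine h.congr (fun m => ?_)
    rw [hnorm m, show (a ^ n / c) ^ m = a ^ (m * n) / c ^ m by
      rw [div_pow, ← pow_mul, mul_comm n m]]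
    have h0 := (hfact m).ne'
    field_simp
    ring
  calc ∫ x in Ioi (0:ℝ), x ^ (n - 1) * Real.exp (-(x ^ n * c)) *
        (∑' m : ℕ, (-1 : ℝ) ^ m * (a * x) ^ (m * n) / ((m.factorial : ℝ)) ^ 2)
      = ∫ x in Ioi (0:ℝ), ∑' m : ℕ, F m x := by
        refine setIntegral_congr_fun measurableSet_Ioi (fun x hx => ?_)
        exact (tsum_mul_left).symm
    _ = ∑' m : ℕ, ∫ x in Ioi (0:ℝ), F m x :=
        (integral_tsum_of_summable_integral_norm hInt hsum).symm
    _ = ∑' m : ℕ, (1 / (n * c)) * ((-(a ^ n / c)) ^ m / (m.factorial : ℝ)) := tsum_congr hval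
    _ = (1 / (n * c)) * ∑' m : ℕ, ((-(a ^ n / c)) ^ m / (m.factorial : ℝ)) := tsum_mul_left
    _ = (1 / (n * c)) * Real.exp (-(a ^ n / c)) := by
        rw [Real.exp_eq_exp_ℝ, NormedSpace.exp_eq_tsum_div]
end

section
/- For n = 2^k with k ∈ ℕ, any a > 0, any real v > −1, and any y > 0, the L_n-transform of x ↦ x^{n v/2} J_v(2 a^{n/2} x^{n/2}) satisfies ∫₀^∞ x^{n−1} exp(−x^n y^n) · x^{n v/2} J_v(2 a^{n/2} x^{n/2}) dx = (1/n) a^{n v/2} y^{−n(v+1)} exp(−a^n/y^n), where x^{n v/2} J_v(2 a^{n/2} x^{n/2}) = ∑_{m=0}^∞ (−1)^m a^{n m + n v/2} x^{n m + n v}/(m! · Γ(m + v + 1)). -/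
open MeasureTheory Set

/-- For `n = 2^k`, `a > 0`, `v > -1` real and `y > 0`,
`Lₙ{x^{nv/2} J_v(2 a^{n/2} x^{n/2}); y} = (1/n) a^{nv/2} y^{-n(v+1)} exp(-aⁿ/yⁿ)`,
where `x^{nv/2} J_v(2 a^{n/2} x^{n/2}) = ∑ₘ (-1)^m a^{nm + nv/2} x^{nm + nv}/(m! Γ(m+v+1))`. -/
theorem Ln_besselJ (k n : ℕ) (hn : n = 2 ^ k) (a v y : ℝ) (ha : 0 < a) (hv : -1 < v)
    (hy : 0 < y) :
    ∫ x in Ioi (0 : ℝ), x ^ (n - 1) * Real.exp (-(x ^ n * y ^ n)) *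
        (∑' m : ℕ, (-1 : ℝ) ^ m * a ^ ((n : ℝ) * m + n * v / 2) * x ^ ((n : ℝ) * m + n * v) /
          (m.factorial * Real.Gamma (m + v + 1)))
      = (1 / n) * a ^ ((n : ℝ) * v / 2) * y ^ (-(n : ℝ) * (v + 1)) *
          Real.exp (-(a ^ n / y ^ n)) := by
  have hn0 : 0 < n := by rw [hn]; positivity
  have hnR : (0 : ℝ) < n := by exact_mod_cast hn0
  have hn1R : (1 : ℝ) ≤ n := by exact_mod_cast hn0
  have hb : (0 : ℝ) < y ^ n := by positivity
  set F : ℕ → ℝ → ℝ := fun m x => x ^ (n - 1) * Real.exp (-(x ^ n * y ^ n)) *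
        ((-1 : ℝ) ^ m * a ^ ((n : ℝ) * m + n * v / 2) * x ^ ((n : ℝ) * m + n * v) /
          (m.factorial * Real.Gamma (m + v + 1))) with hF
  set c : ℕ → ℝ := fun m => (-1 : ℝ) ^ m * a ^ ((n : ℝ) * m + n * v / 2) /
      (m.factorial * Real.Gamma (m + v + 1)) with hc
  set q : ℕ → ℝ := fun m => (n : ℝ) * m + n * v + ((n : ℝ) - 1) with hqdef
  have hq : ∀ m : ℕ, -1 < q m := by
    intro m
    have hm : (0 : ℝ) ≤ m := Nat.cast_nonneg m
    simp only [hqdef]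
    nlinarith
  have hΓ : ∀ m : ℕ, 0 < Real.Gamma ((m : ℝ) + v + 1) := by
    intro m
    apply Real.Gamma_pos_of_pos
    have hm : (0 : ℝ) ≤ m := Nat.cast_nonneg m
    linarith
  have hFeq : ∀ m : ℕ, ∀ x ∈ Ioi (0 : ℝ),
      F m x = c m * (x ^ q m * Real.exp (-(y ^ n) * x ^ (n : ℝ))) := by
    intro m x hx
    have hx0 : (0 : ℝ) < x := hx
    have h1 : x ^ (n - 1) = x ^ ((n : ℝ) - 1) := by
      rw [← Real.rpow_natCast x (n - 1), Nat.cast_sub hn0, Nat.cast_one]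
    have h2 : x ^ n = x ^ (n : ℝ) := (Real.rpow_natCast x n).symm
    have h3 : x ^ q m = x ^ ((n : ℝ) * m + n * v) * x ^ ((n : ℝ) - 1) := by
      rw [← Real.rpow_add hx0]
    have h4 : Real.exp (-(x ^ n * y ^ n)) = Real.exp (-(y ^ n) * x ^ (n : ℝ)) := by
      rw [← h2]; ring_nf
    simp only [hF, hc, h1, h3, h4]
    ring
  have hbase : ∀ m : ℕ,
      IntegrableOn (fun x : ℝ => x ^ q m * Real.exp (-(y ^ n) * x ^ (n : ℝ))) (Ioi 0) :=
    fun m => integrableOn_rpow_mul_exp_neg_mul_rpow (hq m) hnR hb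
  have hFint : ∀ m : ℕ, IntegrableOn (F m) (Ioi 0) := by
    intro m
    exact IntegrableOn.congr_fun ((hbase m).const_mul (c m))
      (fun x hx => (hFeq m x hx).symm) measurableSet_Ioi
  have hqn : ∀ m : ℕ, (q m + 1) / (n : ℝ) = (m : ℝ) + v + 1 := by
    intro m
    simp only [hqdef]
    field_simp
    ring
  have hval : ∀ m : ℕ, ∫ x in Ioi (0 : ℝ), x ^ q m * Real.exp (-(y ^ n) * x ^ (n : ℝ))
      = (y ^ n : ℝ) ^ (-((m : ℝ) + v + 1)) * (1 / (n : ℝ)) *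
          Real.Gamma ((m : ℝ) + v + 1) := by
    intro m
    rw [integral_rpow_mul_exp_neg_mul_rpow hnR (hq m) hb]
    rw [show -(q m + 1) / (n : ℝ) = -((q m + 1) / (n : ℝ)) by ring, hqn m]
  set C : ℝ := (1 / n) * a ^ ((n : ℝ) * v / 2) * y ^ (-(n : ℝ) * (v + 1)) with hC
  have hFval : ∀ m : ℕ, (∫ x in Ioi (0 : ℝ), F m x)
      = C * ((-(a ^ n / y ^ n)) ^ m / m.factorial) := by
    intro m
    rw [setIntegral_congr_fun measurableSet_Ioi (hFeq m), integral_const_mul, hval m]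
    have ha1 : a ^ ((n : ℝ) * m + n * v / 2) = (a ^ n) ^ m * a ^ ((n : ℝ) * v / 2) := by
      rw [Real.rpow_add ha]
      congr 1
      rw [show (n : ℝ) * (m : ℝ) = ((n * m : ℕ) : ℝ) by push_cast; ring,
        Real.rpow_natCast, pow_mul]
    have hy1 : (y ^ n : ℝ) ^ (-((m : ℝ) + v + 1))
        = ((y ^ n) ^ m)⁻¹ * y ^ (-(n : ℝ) * (v + 1)) := by
      rw [show -((m : ℝ) + v + 1) = -(m : ℝ) + -((v + 1)) by ring, Real.rpow_add hb]
      congr 1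
      · rw [Real.rpow_neg hb.le, Real.rpow_natCast]
      · rw [← Real.rpow_natCast y n, ← Real.rpow_mul hy.le]
        congr 1
        ring
    have hneg : (-(a ^ n / y ^ n)) ^ m = (-1 : ℝ) ^ m * (a ^ n) ^ m / (y ^ n) ^ m := by
      rw [show -(a ^ n / y ^ n) = (-1 : ℝ) * (a ^ n / y ^ n) by ring, mul_pow, div_pow]
      ring
    simp only [hc, hC, ha1, hy1, hneg]
    have hΓm := (hΓ m).ne'
    have hfm : (m.factorial : ℝ) ≠ 0 := by exact_mod_cast m.factorial_ne_zero
    have hyn : ((y ^ n : ℝ)) ^ m ≠ 0 := by positivity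
    field_simp
  have hnorm : ∀ m : ℕ, (∫ x in Ioi (0 : ℝ), ‖F m x‖)
      = |C| * ((a ^ n / y ^ n) ^ m / m.factorial) := by
    intro m
    have key : ∫ x in Ioi (0 : ℝ), ‖F m x‖
        = |c m| * ((y ^ n : ℝ) ^ (-((m : ℝ) + v + 1)) * (1 / (n : ℝ)) *
            Real.Gamma ((m : ℝ) + v + 1)) := by
      rw [← hval m, ← integral_const_mul]
      refine setIntegral_congr_fun measurableSet_Ioi (fun x hx => ?_)
      have hx0 : (0 : ℝ) < x := hx
      rw [hFeq m x hx, Real.norm_eq_abs, abs_mul, abs_of_nonneg (by positivity :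
        (0 : ℝ) ≤ x ^ q m * Real.exp (-(y ^ n) * x ^ (n : ℝ)))]
    have key2 : |∫ x in Ioi (0 : ℝ), F m x|
        = |c m| * ((y ^ n : ℝ) ^ (-((m : ℝ) + v + 1)) * (1 / (n : ℝ)) *
            Real.Gamma ((m : ℝ) + v + 1)) := by
      rw [setIntegral_congr_fun measurableSet_Ioi (hFeq m), integral_const_mul, hval m,
        abs_mul, abs_of_nonneg (mul_nonneg (mul_nonneg (Real.rpow_nonneg hb.le _)
          (by positivity : (0:ℝ) ≤ 1 / (n:ℝ))) (hΓ m).le)]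
    rw [key, ← key2, hFval m, abs_mul, abs_div, abs_pow, abs_neg,
      abs_of_nonneg (by positivity : (0 : ℝ) ≤ a ^ n / y ^ n),
      abs_of_nonneg (by positivity : (0 : ℝ) ≤ (m.factorial : ℝ))]
  have hsum : Summable fun m : ℕ => ∫ x in Ioi (0 : ℝ), ‖F m x‖ := by
    rw [show (fun m : ℕ => ∫ x in Ioi (0 : ℝ), ‖F m x‖)
        = fun m : ℕ => |C| * ((a ^ n / y ^ n) ^ m / m.factorial) from funext hnorm]
    exact (Real.summable_pow_div_factorial _).mul_left _
  have hswap := MeasureTheory.integral_tsum_of_summable_integral_norm hFint hsum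
  have hexp : ∀ t : ℝ, (∑' m : ℕ, t ^ m / m.factorial) = Real.exp t := by
    intro t
    rw [Real.exp_eq_exp_ℝ, NormedSpace.exp_eq_tsum_div]
  calc ∫ x in Ioi (0 : ℝ), x ^ (n - 1) * Real.exp (-(x ^ n * y ^ n)) *
        (∑' m : ℕ, (-1 : ℝ) ^ m * a ^ ((n : ℝ) * m + n * v / 2) * x ^ ((n : ℝ) * m + n * v) /
          (m.factorial * Real.Gamma (m + v + 1)))
      = ∫ x in Ioi (0 : ℝ), ∑' m : ℕ, F m x := by
        refine setIntegral_congr_fun measurableSet_Ioi (fun x _ => ?_)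
        exact (tsum_mul_left).symm
    _ = ∑' m : ℕ, ∫ x in Ioi (0 : ℝ), F m x := hswap.symm
    _ = ∑' m : ℕ, C * ((-(a ^ n / y ^ n)) ^ m / m.factorial) := by
        exact tsum_congr hFval
    _ = C * ∑' m : ℕ, (-(a ^ n / y ^ n)) ^ m / m.factorial := tsum_mul_left
    _ = C * Real.exp (-(a ^ n / y ^ n)) := by rw [hexp]
end

section
/- For n = 2^k with k ∈ ℕ, any a > 0, and any y > 0, the L_n-transform of x ↦ erfc((1/2) a^{n/2} x^{−n/2}) satisfies ∫₀^∞ x^{n−1} exp(−x^n y^n) erfc((1/2) a^{n/2} x^{−n/2}) dx = (1/n) y^{−n} exp(−a^{n/2} y^{n/2}), where erfc(t) = (2/√π) ∫_t^∞ exp(−u²) du. -/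
open MeasureTheory Set

/-- The complementary error function `erfc(t) = (2/√π) ∫_t^∞ exp(-u²) du`. -/
noncomputable def erfc (t : ℝ) : ℝ :=
  (2 / Real.sqrt Real.pi) * ∫ u in Ioi t, Real.exp (-u ^ 2)

lemma sub_sq_eq {p q u : ℝ} (hp : 0 < p) (hq : 0 < q) (hu : 0 < u) :
    p * u ^ 2 + q / u ^ 2 =
      (Real.sqrt p * u - Real.sqrt q / u) ^ 2 + 2 * Real.sqrt (p * q) := by
  have h1 : Real.sqrt p ^ 2 = p := Real.sq_sqrt hp.le
  have h2 : Real.sqrt q ^ 2 = q := Real.sq_sqrt hq.le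
  have h3 : Real.sqrt (p * q) = Real.sqrt p * Real.sqrt q := Real.sqrt_mul hp.le q
  have hu' : u ≠ 0 := hu.ne'
  field_simp [h3]
  linear_combination (-(u^2*u^2)) * h1 - h2 - 2*u^2*h3

lemma phi_image {p q : ℝ} (hp : 0 < p) (hq : 0 < q) :
    (fun u : ℝ => Real.sqrt p * u - Real.sqrt q / u) '' Ioi 0 = univ := by
  have hsp : 0 < Real.sqrt p := Real.sqrt_pos.mpr hp
  have hsq : 0 < Real.sqrt q := Real.sqrt_pos.mpr hq
  apply eq_univ_of_forall
  intro w
  set D := Real.sqrt (w ^ 2 + 4 * Real.sqrt p * Real.sqrt q) with hD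
  have hD2 : D ^ 2 = w ^ 2 + 4 * Real.sqrt p * Real.sqrt q := by
    apply Real.sq_sqrt; nlinarith [sq_nonneg w]
  have hDpos : |w| < D := by
    rw [← Real.sqrt_sq_eq_abs]
    apply Real.sqrt_lt_sqrt (sq_nonneg w)
    nlinarith
  have hwD : 0 < w + D := by
    rcases abs_lt.mp hDpos with ⟨h1, _⟩
    linarith
  refine ⟨(w + D) / (2 * Real.sqrt p), div_pos hwD (by positivity), ?_⟩
  have hne : (w + D) / (2 * Real.sqrt p) ≠ 0 := by positivity
  field_simp
  nlinarith [hD2]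

lemma glasser {p q : ℝ} (hp : 0 < p) (hq : 0 < q) :
    ∫ u in Ioi (0:ℝ), Real.exp (-(p * u ^ 2 + q / u ^ 2)) =
      Real.sqrt Real.pi / (2 * Real.sqrt p) * Real.exp (-(2 * Real.sqrt (p * q))) := by
  set sp := Real.sqrt p with hsp_def
  set sq := Real.sqrt q with hsq_def
  have hsp : 0 < sp := Real.sqrt_pos.mpr hp
  have hsq : 0 < sq := Real.sqrt_pos.mpr hq
  set r := sq / sp with hr_def
  have hr : 0 < r := div_pos hsq hsp
  have hspr : sp * r = sq := by rw [hr_def]; field_simp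
  set φ : ℝ → ℝ := fun u => sp * u - sq / u with hφ_def
  set E : ℝ → ℝ := fun u => Real.exp (-(φ u) ^ 2) with hE_def
  -- derivative of φ
  have hderiv : ∀ u ∈ Ioi (0:ℝ), HasDerivWithinAt φ (sp + sq / u ^ 2) (Ioi 0) u := by
    intro u hu
    have hu0 : (u:ℝ) ≠ 0 := (mem_Ioi.mp hu).ne'
    have h3 : HasDerivAt (fun x : ℝ => sp * x - sq * x⁻¹) (sp * 1 - sq * -(u ^ 2)⁻¹) u :=
      ((hasDerivAt_id u).const_mul sp).sub ((hasDerivAt_inv hu0).const_mul sq)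
    have h4 : HasDerivAt φ (sp + sq / u ^ 2) u := by
      have heq : φ = fun x : ℝ => sp * x - sq * x⁻¹ := by
        funext x; simp [hφ_def, div_eq_mul_inv]
      rw [heq]
      convert h3 using 1
      field_simp
      ring
    exact h4.hasDerivWithinAt
  -- injectivity of φ
  have hinj : InjOn φ (Ioi (0:ℝ)) := by
    apply StrictMonoOn.injOn
    intro u hu v hv huv
    have hu0 : (0:ℝ) < u := hu
    have hv0 : (0:ℝ) < v := hv
    have h1 : sp * u < sp * v := by nlinarith
    have h2 : sq / v ≤ sq / u := div_le_div_of_nonneg_left hsq.le hu0 huv.le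
    simp only [hφ_def]
    linarith
  have himg := phi_image hp hq
  have hgauss : Integrable (fun x : ℝ => Real.exp (-x ^ 2)) := by
    simpa using integrable_exp_neg_mul_sq (one_pos)
  have hAbs : IntegrableOn (fun u => |sp + sq / u ^ 2| • Real.exp (-(φ u) ^ 2)) (Ioi 0) := by
    have := (integrableOn_image_iff_integrableOn_abs_deriv_smul measurableSet_Ioi hderiv hinj
      (fun x => Real.exp (-x ^ 2))).mp
    apply this
    rw [himg]
    exact hgauss.integrableOn
  have habs_eq : ∀ u ∈ Ioi (0:ℝ), |sp + sq / u ^ 2| = sp + sq / u ^ 2 := by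
    intro u hu
    have : (0:ℝ) < u := hu
    rw [abs_of_pos]; positivity
  have hsum : IntegrableOn (fun u => (sp + sq / u ^ 2) * E u) (Ioi 0) := by
    apply hAbs.congr_fun _ measurableSet_Ioi
    intro u hu
    simp only [smul_eq_mul]
    rw [habs_eq u hu]
  have hmeasE : AEStronglyMeasurable E (volume.restrict (Ioi 0)) := by
    apply Measurable.aestronglyMeasurable
    apply Measurable.exp
    apply Measurable.neg
    apply Measurable.pow _ measurable_const
    exact (measurable_const.mul measurable_id).sub (measurable_const.div measurable_id)
  have hE_int : IntegrableOn E (Ioi 0) := by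
    apply Integrable.mono (hsum.const_mul (1 / sp)) hmeasE
    filter_upwards [ae_restrict_mem measurableSet_Ioi] with u hu
    have hu0 : (0:ℝ) < u := hu
    have hE0 : 0 < E u := Real.exp_pos _
    have hdiff : 1 / sp * ((sp + sq / u ^ 2) * E u) - E u = sq / (sp * u ^ 2) * E u := by
      field_simp
      ring
    have hpos : 0 ≤ sq / (sp * u ^ 2) * E u := by positivity
    rw [Real.norm_eq_abs, Real.norm_eq_abs, abs_of_pos hE0, abs_of_pos (by nlinarith)]
    linarith
  have hK_int : IntegrableOn (fun u => r / u ^ 2 * E u) (Ioi 0) := by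
    apply Integrable.mono (hsum.const_mul (1 / sp)) _
    · filter_upwards [ae_restrict_mem measurableSet_Ioi] with u hu
      have hu0 : (0:ℝ) < u := hu
      have hE0 : 0 < E u := Real.exp_pos _
      have hdiff : 1 / sp * ((sp + sq / u ^ 2) * E u) - r / u ^ 2 * E u = E u := by
        field_simp [hr_def]
        linear_combination -hspr
      have hpos : 0 < r / u ^ 2 * E u := by positivity
      rw [Real.norm_eq_abs, Real.norm_eq_abs, abs_of_pos hpos, abs_of_pos (by nlinarith)]
      linarith
    · apply Measurable.aestronglyMeasurable
      apply Measurable.mul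
      · exact measurable_const.div (measurable_id.pow measurable_const)
      · apply Measurable.exp
        apply Measurable.neg
        apply Measurable.pow _ measurable_const
        exact (measurable_const.mul measurable_id).sub (measurable_const.div measurable_id)
  -- J + K identity from substitution w = φ u
  have key := integral_image_eq_integral_abs_deriv_smul measurableSet_Ioi hderiv hinj
    (fun x => Real.exp (-x ^ 2))
  rw [himg] at key
  have hLHS : ∫ x in (univ : Set ℝ), Real.exp (-x ^ 2) = Real.sqrt Real.pi := by
    rw [Measure.restrict_univ]
    have := integral_gaussian 1
    simpa using this
  rw [hLHS] at key
  have key2 : Real.sqrt Real.pi = ∫ u in Ioi (0:ℝ), (sp * E u + sp * (r / u ^ 2 * E u)) := by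
    rw [key]
    apply setIntegral_congr_fun measurableSet_Ioi
    intro u hu
    have hu0 : (0:ℝ) < u := hu
    simp only [smul_eq_mul]
    rw [habs_eq u hu]
    have h5 : sp + sq / u ^ 2 = sp * (1 + r / u ^ 2) := by
      field_simp [hr_def]
      linear_combination -hspr
    rw [h5, hE_def]
    ring
  rw [integral_add (hE_int.const_mul sp) (hK_int.const_mul sp),
    integral_const_mul, integral_const_mul] at key2
  -- K = J via u ↦ r / u
  have hderiv2 : ∀ u ∈ Ioi (0:ℝ), HasDerivWithinAt (fun u : ℝ => r / u) (-(r / u ^ 2)) (Ioi 0) u := by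
    intro u hu
    have hu0 : (u:ℝ) ≠ 0 := (mem_Ioi.mp hu).ne'
    have h1 : HasDerivAt (fun x : ℝ => r * x⁻¹) (r * -(u ^ 2)⁻¹) u :=
      (hasDerivAt_inv hu0).const_mul r
    have h2 : HasDerivAt (fun u : ℝ => r / u) (-(r / u ^ 2)) u := by
      have heq : (fun u : ℝ => r / u) = fun x : ℝ => r * x⁻¹ := by
        funext x; rw [div_eq_mul_inv]
      rw [heq]
      convert h1 using 1
      field_simp
    exact h2.hasDerivWithinAt
  have hanti : StrictAntiOn (fun u : ℝ => r / u) (Ioi (0:ℝ)) := by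
    intro u hu v hv huv
    exact div_lt_div_of_pos_left hr hu huv
  have hinj2 : InjOn (fun u : ℝ => r / u) (Ioi (0:ℝ)) := hanti.injOn
  have himg2 : (fun u : ℝ => r / u) '' Ioi 0 = Ioi (0:ℝ) := by
    ext v
    constructor
    · rintro ⟨u, hu, rfl⟩
      exact div_pos hr hu
    · intro hv
      exact ⟨r / v, div_pos hr hv, by field_simp⟩
  have keyK := integral_image_eq_integral_abs_deriv_smul measurableSet_Ioi hderiv2 hinj2 E
  rw [himg2] at keyK
  have hJK : ∫ u in Ioi (0:ℝ), E u = ∫ u in Ioi (0:ℝ), r / u ^ 2 * E u := by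
    rw [keyK]
    apply setIntegral_congr_fun measurableSet_Ioi
    intro u hu
    have hu0 : (0:ℝ) < u := hu
    have h1 : sp * (r / u) = sq / u := by rw [mul_div_assoc', hspr]
    have h2 : sq / (r / u) = sp * u := by
      rw [div_div_eq_mul_div, hr_def]
      field_simp
    have hφr : φ (r / u) = -(φ u) := by
      simp only [hφ_def]
      rw [h1, h2]
      ring
    have hEr : E (r / u) = E u := by
      simp only [hE_def]
      rw [hφr, neg_sq]
    simp only [smul_eq_mul]
    rw [abs_neg, abs_of_pos (by positivity : (0:ℝ) < r / u ^ 2), hEr]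
  rw [← hJK] at key2
  have hJ : ∫ u in Ioi (0:ℝ), E u = Real.sqrt Real.pi / (2 * sp) := by
    rw [eq_div_iff (by positivity : (2:ℝ) * sp ≠ 0)]
    linear_combination -key2
  have hfinal : ∀ u ∈ Ioi (0:ℝ), Real.exp (-(p * u ^ 2 + q / u ^ 2)) =
      Real.exp (-(2 * Real.sqrt (p * q))) * E u := by
    intro u hu
    have hu0 : (0:ℝ) < u := hu
    rw [hE_def, ← Real.exp_add]
    congr 1
    rw [sub_sq_eq hp hq hu0]
    ring
  rw [setIntegral_congr_fun measurableSet_Ioi hfinal, integral_const_mul, hJ]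
  ring


lemma integral_exp_mul_Ioi' {s : ℝ} (hs : 0 < s) (T : ℝ) :
    ∫ t in Ioi T, Real.exp (-(t * s)) = Real.exp (-(T * s)) / s := by
  have hderiv : ∀ t ∈ Ioi T, HasDerivAt (fun t : ℝ => -(1 / s) * Real.exp (-(t * s)))
      (Real.exp (-(t * s))) t := by
    intro t _
    have h1 : HasDerivAt (fun t : ℝ => -(t * s)) (-s) t := by
      exact ((hasDerivAt_id' t).mul_const s).neg.congr_deriv (by ring)
    have h2 := (h1.exp).const_mul (-(1 / s))
    refine h2.congr_deriv ?_
    field_simp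
  have hint : IntegrableOn (fun t : ℝ => Real.exp (-(t * s))) (Ioi T) := by
    have := exp_neg_integrableOn_Ioi T hs
    simpa [mul_comm] using this
  have htend : Filter.Tendsto (fun t : ℝ => -(1 / s) * Real.exp (-(t * s)))
      Filter.atTop (nhds (-(1 / s) * 0)) := by
    apply Filter.Tendsto.const_mul
    have h1 : Filter.Tendsto (fun t : ℝ => t * s) Filter.atTop Filter.atTop :=
      Filter.Tendsto.atTop_mul_const hs Filter.tendsto_id
    have h2 : Filter.Tendsto (fun x : ℝ => Real.exp (-x)) Filter.atTop (nhds 0) :=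
      Real.tendsto_exp_neg_atTop_nhds_zero
    exact h2.comp h1
  have := integral_Ioi_of_hasDerivAt_of_tendsto
    (Continuous.continuousWithinAt (by fun_prop) : ContinuousWithinAt (fun t : ℝ => -(1 / s) * Real.exp (-(t * s))) (Ici T) T)
    hderiv hint htend
  rw [this]
  field_simp
  ring

lemma laplace_erfc {s c : ℝ} (hs : 0 < s) (hc : 0 < c) :
    ∫ t in Ioi (0:ℝ), Real.exp (-(t * s)) * erfc (1 / 2 * c * t ^ (-(1:ℝ) / 2))
      = 1 / s * Real.exp (-(c * Real.sqrt s)) := by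
  have hrp : ∀ t : ℝ, 0 < t → t ^ (-(1:ℝ) / 2) = (Real.sqrt t)⁻¹ := by
    intro t ht
    rw [show (-(1:ℝ) / 2) = -(1 / 2) by ring, Real.rpow_neg ht.le, Real.sqrt_eq_rpow]
  have hgauss : Integrable (fun x : ℝ => Real.exp (-x ^ 2)) := by
    simpa using integrable_exp_neg_mul_sq (one_pos)
  set S : Set (ℝ × ℝ) := {z : ℝ × ℝ | 1 / 2 * c * z.1 ^ (-(1:ℝ) / 2) < z.2} with hS_def
  have hSm : MeasurableSet S := by
    apply measurableSet_lt
    · exact (measurable_fst.pow_const _).const_mul _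
    · exact measurable_snd
  set f : ℝ × ℝ → ℝ := fun z => Real.exp (-(z.1 * s)) * Real.exp (-z.2 ^ 2) with hf_def
  set F : ℝ × ℝ → ℝ := fun z => S.indicator f z with hF_def
  -- integrability of F on the product of restricted measures
  have hfint : Integrable f ((volume.restrict (Ioi (0:ℝ))).prod (volume.restrict (Ioi (0:ℝ)))) := by
    have hexp1 : IntegrableOn (fun t : ℝ => Real.exp (-(t * s))) (Ioi (0:ℝ)) :=
      (exp_neg_integrableOn_Ioi (0:ℝ) hs).congr_fun
        (fun x _ => by ring_nf) measurableSet_Ioi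
    rw [hf_def]
    exact Integrable.mul_prod hexp1 hgauss.integrableOn
  have hFmeas : Measurable F := by
    apply Measurable.indicator _ hSm
    exact ((measurable_fst.mul_const s).neg.exp).mul ((measurable_snd.pow measurable_const).neg.exp)
  have hFint : Integrable F ((volume.restrict (Ioi (0:ℝ))).prod (volume.restrict (Ioi (0:ℝ)))) := by
    apply hfint.mono hFmeas.aestronglyMeasurable
    filter_upwards with z
    exact norm_indicator_le_norm_self f z
  -- key equivalence of the defining conditions
  have hcond : ∀ t u : ℝ, 0 < t → 0 < u →
      (1 / 2 * c * t ^ (-(1:ℝ) / 2) < u ↔ c ^ 2 / (4 * u ^ 2) < t) := by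
    intro t u ht hu
    have hw : 0 < Real.sqrt t := Real.sqrt_pos.mpr ht
    have hw2 : Real.sqrt t ^ 2 = t := Real.sq_sqrt ht.le
    rw [hrp t ht]
    have hiff1 : 1 / 2 * c * (Real.sqrt t)⁻¹ < u ↔ c < u * (2 * Real.sqrt t) := by
      rw [show 1 / 2 * c * (Real.sqrt t)⁻¹ = c / (2 * Real.sqrt t) by
        field_simp, div_lt_iff₀ (by positivity)]
    have hiff2 : c ^ 2 / (4 * u ^ 2) < t ↔ c ^ 2 < t * (4 * u ^ 2) :=
      div_lt_iff₀ (by positivity)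
    rw [hiff1, hiff2]
    constructor
    · intro h
      nlinarith [mul_lt_mul'' h h hc.le hc.le, hw2]
    · intro h
      have h2 : c ^ 2 < (u * (2 * Real.sqrt t)) ^ 2 := by nlinarith [hw2]
      exact lt_of_pow_lt_pow_left₀ 2 (by positivity) h2
  -- Step 1: rewrite the integrand using F
  have step1 : ∫ t in Ioi (0:ℝ), Real.exp (-(t * s)) * erfc (1 / 2 * c * t ^ (-(1:ℝ) / 2))
      = 2 / Real.sqrt Real.pi * ∫ t in Ioi (0:ℝ), ∫ u in Ioi (0:ℝ), F (t, u) := by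
    rw [← integral_const_mul]
    apply setIntegral_congr_fun measurableSet_Ioi
    intro t ht
    have ht0 : (0:ℝ) < t := ht
    show Real.exp (-(t * s)) * erfc (1 / 2 * c * t ^ (-(1:ℝ) / 2))
        = 2 / Real.sqrt Real.pi * ∫ u in Ioi (0:ℝ), F (t, u)
    have hgt : 0 < 1 / 2 * c * t ^ (-(1:ℝ) / 2) := by
      rw [hrp t ht0]; positivity
    have hind : ∀ u : ℝ, F (t, u) = (Ioi (1 / 2 * c * t ^ (-(1:ℝ) / 2))).indicator
        (fun u => Real.exp (-(t * s)) * Real.exp (-u ^ 2)) u := by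
      intro u
      simp only [hF_def, hf_def, Set.indicator_apply, hS_def, mem_setOf_eq, mem_Ioi]
    have : ∫ u in Ioi (0:ℝ), F (t, u)
        = ∫ u in Ioi (1 / 2 * c * t ^ (-(1:ℝ) / 2)), Real.exp (-(t * s)) * Real.exp (-u ^ 2) := by
      rw [show (fun u => F (t, u)) = (Ioi (1 / 2 * c * t ^ (-(1:ℝ) / 2))).indicator
        (fun u => Real.exp (-(t * s)) * Real.exp (-u ^ 2)) from funext hind]
      rw [setIntegral_indicator measurableSet_Ioi]
      congr 1
      rw [Ioi_inter_Ioi, max_eq_right hgt.le]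
    rw [this, integral_const_mul, erfc]
    ring
  -- Step 2: swap the order of integration
  have step2 : ∫ t in Ioi (0:ℝ), ∫ u in Ioi (0:ℝ), F (t, u)
      = ∫ u in Ioi (0:ℝ), ∫ t in Ioi (0:ℝ), F (t, u) := by
    exact integral_integral_swap hFint
  -- Step 3: compute the inner t-integral
  have step3 : ∫ u in Ioi (0:ℝ), ∫ t in Ioi (0:ℝ), F (t, u)
      = ∫ u in Ioi (0:ℝ), Real.exp (-(c ^ 2 / (4 * u ^ 2) * s)) / s * Real.exp (-u ^ 2) := by
    apply setIntegral_congr_fun measurableSet_Ioi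
    intro u hu
    have hu0 : (0:ℝ) < u := hu
    have hT : 0 < c ^ 2 / (4 * u ^ 2) := by positivity
    have hind : ∀ t ∈ Ioi (0:ℝ), F (t, u) = (Ioi (c ^ 2 / (4 * u ^ 2))).indicator
        (fun t => Real.exp (-(t * s)) * Real.exp (-u ^ 2)) t := by
      intro t ht
      have ht0 : (0:ℝ) < t := ht
      simp only [hF_def, hf_def, Set.indicator_apply, hS_def, mem_setOf_eq, mem_Ioi]
      rw [if_congr (hcond t u ht0 hu0) rfl rfl]
    show (∫ t in Ioi (0:ℝ), F (t, u))
        = Real.exp (-(c ^ 2 / (4 * u ^ 2) * s)) / s * Real.exp (-u ^ 2)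
    calc ∫ t in Ioi (0:ℝ), F (t, u)
        = ∫ t in Ioi (0:ℝ), (Ioi (c ^ 2 / (4 * u ^ 2))).indicator
            (fun t => Real.exp (-(t * s)) * Real.exp (-u ^ 2)) t :=
          setIntegral_congr_fun measurableSet_Ioi hind
      _ = ∫ t in Ioi (c ^ 2 / (4 * u ^ 2)), Real.exp (-(t * s)) * Real.exp (-u ^ 2) := by
          rw [setIntegral_indicator measurableSet_Ioi]
          congr 1
          rw [Ioi_inter_Ioi, max_eq_right hT.le]
      _ = (∫ t in Ioi (c ^ 2 / (4 * u ^ 2)), Real.exp (-(t * s))) * Real.exp (-u ^ 2) := by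
          rw [← integral_mul_const]
      _ = Real.exp (-(c ^ 2 / (4 * u ^ 2) * s)) / s * Real.exp (-u ^ 2) := by
          rw [integral_exp_mul_Ioi' hs]
  -- Step 4: recognize the Glasser integral
  have step4 : ∫ u in Ioi (0:ℝ), Real.exp (-(c ^ 2 / (4 * u ^ 2) * s)) / s * Real.exp (-u ^ 2)
      = 1 / s * ∫ u in Ioi (0:ℝ), Real.exp (-(1 * u ^ 2 + (c / 2) ^ 2 * s / u ^ 2)) := by
    rw [← integral_const_mul]
    apply setIntegral_congr_fun measurableSet_Ioi
    intro u hu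
    have hu0 : (0:ℝ) < u := hu
    show Real.exp (-(c ^ 2 / (4 * u ^ 2) * s)) / s * Real.exp (-u ^ 2)
        = 1 / s * Real.exp (-(1 * u ^ 2 + (c / 2) ^ 2 * s / u ^ 2))
    have hcomb : Real.exp (-(c ^ 2 / (4 * u ^ 2) * s)) * Real.exp (-u ^ 2)
        = Real.exp (-(1 * u ^ 2 + (c / 2) ^ 2 * s / u ^ 2)) := by
      rw [← Real.exp_add]
      congr 1
      field_simp
      ring
    rw [div_mul_eq_mul_div, hcomb]
    ring
  have hq : 0 < (c / 2) ^ 2 * s := by positivity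
  have step5 : ∫ u in Ioi (0:ℝ), Real.exp (-(1 * u ^ 2 + (c / 2) ^ 2 * s / u ^ 2))
      = Real.sqrt Real.pi / 2 * Real.exp (-(c * Real.sqrt s)) := by
    rw [glasser one_pos hq]
    have h1 : Real.sqrt (1 * ((c / 2) ^ 2 * s)) = c / 2 * Real.sqrt s := by
      rw [one_mul, Real.sqrt_mul (sq_nonneg _), Real.sqrt_sq (by positivity : (0:ℝ) ≤ c / 2)]
    rw [h1, Real.sqrt_one, mul_one]
    have h2 : (2:ℝ) * (c / 2 * Real.sqrt s) = c * Real.sqrt s := by ring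
    rw [h2]
  rw [step1, step2, step3, step4, step5]
  have hπ : Real.sqrt Real.pi ≠ 0 := by positivity
  field_simp

/-- For `n = 2^k`, `a > 0` and `y > 0`,
`Lₙ{erfc((1/2) a^{n/2} x^{-n/2}); y} = (1/n) y^{-n} exp(-a^{n/2} y^{n/2})`. -/
theorem Ln_erfc (k n : ℕ) (hn : n = 2 ^ k) (a y : ℝ) (ha : 0 < a) (hy : 0 < y) :
    ∫ x in Ioi (0 : ℝ), x ^ (n - 1) * Real.exp (-(x ^ n * y ^ n)) *
        erfc ((1 / 2) * a ^ ((n : ℝ) / 2) * x ^ (-(n : ℝ) / 2))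
      = (1 / n) * y ^ (-(n : ℝ)) * Real.exp (-(a ^ ((n : ℝ) / 2) * y ^ ((n : ℝ) / 2))) := by
  have hn1 : 1 ≤ n := hn ▸ Nat.one_le_two_pow
  have hN : (0:ℝ) < (n:ℝ) := by exact_mod_cast Nat.lt_of_lt_of_le Nat.zero_lt_one hn1
  set N := (n:ℝ) with hN_def
  set c := a ^ (N / 2) with hc_def
  have hc : 0 < c := Real.rpow_pos_of_pos ha _
  set s := y ^ n with hs_def
  have hs : 0 < s := pow_pos hy n
  set g : ℝ → ℝ := fun t =>
    (1 / N) * (Real.exp (-(t * s)) * erfc (1 / 2 * c * t ^ (-(1:ℝ) / 2))) with hg_def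
  have hcongr : ∀ x ∈ Ioi (0:ℝ),
      x ^ (n - 1) * Real.exp (-(x ^ n * s)) * erfc (1 / 2 * c * x ^ (-N / 2))
        = (|N| * x ^ (N - 1)) • g (x ^ N) := by
    intro x hx
    have hx0 : (0:ℝ) < x := hx
    have hxN : x ^ N = x ^ n := Real.rpow_natCast x n
    have h1 : (x ^ N) ^ (-(1:ℝ) / 2) = x ^ (-N / 2) := by
      rw [← Real.rpow_mul hx0.le]
      congr 1
      ring
    have h2 : x ^ (N - 1) = (x : ℝ) ^ (n - 1) := by
      rw [show N - 1 = ((n - 1 : ℕ) : ℝ) by rw [Nat.cast_sub hn1]; simp [hN_def],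
        Real.rpow_natCast]
    rw [smul_eq_mul]
    simp only [hg_def]
    rw [h1, hxN, h2, abs_of_pos hN]
    field_simp
  rw [setIntegral_congr_fun measurableSet_Ioi hcongr, integral_comp_rpow_Ioi g hN.ne']
  simp only [hg_def]
  rw [integral_const_mul, laplace_erfc hs hc]
  have hy1 : y ^ (-N) = s⁻¹ := by
    rw [Real.rpow_neg hy.le, Real.rpow_natCast, hs_def]
  have hy2 : Real.sqrt s = y ^ (N / 2) := by
    rw [hs_def, ← Real.rpow_natCast y n, ← hN_def, Real.sqrt_eq_rpow,
      ← Real.rpow_mul hy.le]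
    congr 1
    ring
  rw [hy1, hy2]
  ring
end

section
/- For n = 2^k with k ∈ ℕ, any a > 0, and any y > 0, the L_n-transform of x ↦ exp(−a x^{2n}) satisfies ∫₀^∞ x^{n−1} exp(−x^n y^n) exp(−a x^{2n}) dx = (√π/(2 n √a)) · exp(y^{2n}/(4a)) · erfc(y^n/(2√a)), where erfc(t) = (2/√π) ∫_t^∞ exp(−u²) du. -/
open MeasureTheory Set

lemma integral_comp_add_right_Ioi (g : ℝ → ℝ) (a c : ℝ) :
    (∫ x in Ioi a, g (x + c)) = ∫ x in Ioi (a + c), g x := by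
  rw [← integral_indicator measurableSet_Ioi, ← integral_indicator measurableSet_Ioi,
    ← integral_add_right_eq_self (fun x => (Ioi (a + c)).indicator g x) c]
  congr 1
  ext x
  simp only [indicator_apply, mem_Ioi, add_lt_add_iff_right]

lemma complete_sq (a b t : ℝ) (ha : 0 < a) :
    Real.exp (-(t * b) - a * t ^ 2)
      = Real.exp (b ^ 2 / (4 * a)) *
        Real.exp (-(Real.sqrt a * t + b / (2 * Real.sqrt a)) ^ 2) := by
  obtain ⟨s, hs0, rfl⟩ : ∃ s : ℝ, 0 < s ∧ s ^ 2 = a :=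
    ⟨Real.sqrt a, Real.sqrt_pos.mpr ha, Real.sq_sqrt ha.le⟩
  rw [Real.sqrt_sq hs0.le, ← Real.exp_add]
  congr 1
  field_simp
  ring

/-- For `n = 2^k`, `a > 0` and `y > 0`,
`Lₙ{exp(-a x^{2n}); y} = (√π/(2 n √a)) exp(y^{2n}/(4a)) erfc(yⁿ/(2√a))`. -/
theorem Ln_gaussian (k n : ℕ) (hn : n = 2 ^ k) (a y : ℝ) (ha : 0 < a) (hy : 0 < y) :
    ∫ x in Ioi (0 : ℝ), x ^ (n - 1) * Real.exp (-(x ^ n * y ^ n)) * Real.exp (-(a * x ^ (2 * n)))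
      = (Real.sqrt Real.pi / (2 * n * Real.sqrt a)) * Real.exp (y ^ (2 * n) / (4 * a)) *
          erfc (y ^ n / (2 * Real.sqrt a)) := by
  have hn1 : 1 ≤ n := hn ▸ Nat.one_le_two_pow
  have hnR : (0 : ℝ) < n := by exact_mod_cast hn1
  have hsa : (0 : ℝ) < Real.sqrt a := Real.sqrt_pos.mpr ha
  set b : ℝ := y ^ n with hb
  set c : ℝ := b / (2 * Real.sqrt a) with hc
  set g : ℝ → ℝ := fun t => (n : ℝ)⁻¹ * Real.exp (-(t * b) - a * t ^ 2) with hg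
  have step1 : (∫ x in Ioi (0 : ℝ),
      x ^ (n - 1) * Real.exp (-(x ^ n * y ^ n)) * Real.exp (-(a * x ^ (2 * n))))
      = ∫ t in Ioi (0 : ℝ), g t := by
    rw [← integral_comp_rpow_Ioi_of_pos (g := g) hnR]
    refine setIntegral_congr_fun measurableSet_Ioi fun x hx => ?_
    have hx0 : (0 : ℝ) < x := hx
    have hrp : x ^ ((n : ℝ)) = x ^ n := Real.rpow_natCast x n
    have hrp1 : x ^ ((n : ℝ) - 1) = x ^ (n - 1) := by
      rw [show (n : ℝ) - 1 = ((n - 1 : ℕ) : ℝ) by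
        push_cast [Nat.cast_sub hn1]; ring]
      exact Real.rpow_natCast x (n - 1)
    simp only [smul_eq_mul, hg, hrp, hrp1]
    have h2n : x ^ (2 * n) = (x ^ n) ^ 2 := by rw [mul_comm, pow_mul]
    rw [h2n, ← hb, mul_assoc, ← Real.exp_add, sub_eq_add_neg]
    rw [show x ^ n * b = b * x ^ n from mul_comm _ _, show -(b * x ^ n) = -(x ^ n * b) by ring]
    field_simp
  have step2 : (∫ t in Ioi (0 : ℝ), g t)
      = (n : ℝ)⁻¹ * Real.exp (b ^ 2 / (4 * a)) *
        ∫ t in Ioi (0 : ℝ), Real.exp (-(Real.sqrt a * t + c) ^ 2) := by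
    simp_rw [hg, fun t => complete_sq a b t ha, ← hc]
    rw [integral_const_mul, integral_const_mul]
    ring
  have step3 : (∫ t in Ioi (0 : ℝ), Real.exp (-(Real.sqrt a * t + c) ^ 2))
      = (Real.sqrt a)⁻¹ * ∫ u in Ioi c, Real.exp (-u ^ 2) := by
    calc (∫ t in Ioi (0 : ℝ), Real.exp (-(Real.sqrt a * t + c) ^ 2))
        = ∫ t in Ioi (0 : ℝ), (fun s => Real.exp (-(s + c) ^ 2)) (Real.sqrt a * t) := rfl
      _ = (Real.sqrt a)⁻¹ • ∫ s in Ioi (Real.sqrt a * 0), (fun s => Real.exp (-(s + c) ^ 2)) s :=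
          by exact integral_comp_mul_left_Ioi (fun s => Real.exp (-(s + c) ^ 2)) 0 hsa
      _ = (Real.sqrt a)⁻¹ * ∫ u in Ioi c, Real.exp (-u ^ 2) := by
          rw [mul_zero, smul_eq_mul]
          congr 1
          simpa using integral_comp_add_right_Ioi (fun u => Real.exp (-u ^ 2)) 0 c
  rw [step1, step2, step3, erfc]
  have hπ : (0 : ℝ) < Real.sqrt Real.pi := Real.sqrt_pos.mpr Real.pi_pos
  have hb2 : b ^ 2 = y ^ (2 * n) := by rw [hb, ← pow_mul, mul_comm]
  rw [hb2]
  field_simp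
end

section
/- (Theorem 2.1) For n = 2^k with k ∈ ℕ and a positive integer K ≥ 1, let f : [0,∞) → ℝ and suppose that the iterated δ̄-derivatives δ̄⁰f = f, δ̄f, …, δ̄^{K−1}f are all continuous on [0,∞) and differentiable on (0,∞), that each δ̄^j f (0 ≤ j ≤ K) is of exponential order exp(α^n x^n) as x → ∞ for some α > 0, and that for y > α each function x ↦ x^{n−1} exp(−y^n x^n) (δ̄^j f)(x), 0 ≤ j ≤ K, is integrable on (0,∞). Then for every y > α: L_n{δ̄^K f; y} = (n y^n)^K L_n{f; y} − ∑_{j=0}^{K−1} (n y^n)^{K−1−j} (δ̄^j f)(0). -/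
open MeasureTheory Set Filter

/-- The `δ̄`-derivative operator: `(δ̄f)(x) = (1/x^{n-1}) f'(x)`. -/
noncomputable def deltaBar (n : ℕ) (f : ℝ → ℝ) : ℝ → ℝ :=
  fun x => deriv f x / x ^ (n - 1)

lemma step_lemma (n : ℕ) (hn1 : 1 ≤ n) (g : ℝ → ℝ) (α M y : ℝ)
    (hα : 0 < α) (hy : α < y)
    (hc : ContinuousOn g (Ici 0)) (hd : DifferentiableOn ℝ g (Ioi 0))
    (hord : ∀ᶠ x in atTop, |g x| ≤ M * Real.exp (α ^ n * x ^ n))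
    (hint0 : IntegrableOn (fun x : ℝ => x ^ (n-1) * Real.exp (-(y^n * x^n)) * g x) (Ioi 0))
    (hint1 : IntegrableOn
      (fun x : ℝ => x ^ (n-1) * Real.exp (-(y^n * x^n)) * deltaBar n g x) (Ioi 0)) :
    ∫ x in Ioi (0:ℝ), x ^ (n-1) * Real.exp (-(x^n * y^n)) * deltaBar n g x
      = (n * y^n) * (∫ x in Ioi (0:ℝ), x ^ (n-1) * Real.exp (-(x^n * y^n)) * g x) - g 0 := by
  have hn0 : n ≠ 0 := by omega
  set F : ℝ → ℝ := fun x => Real.exp (-(y^n * x^n)) * g x with hF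
  set F' : ℝ → ℝ := fun x =>
    Real.exp (-(y^n * x^n)) * deriv g x
      - (n * y^n) * (x ^ (n-1) * Real.exp (-(y^n * x^n)) * g x) with hF'
  have hderiv : ∀ x ∈ Ioi (0:ℝ), HasDerivAt F (F' x) x := by
    intro x hx
    have hgd : DifferentiableAt ℝ g x := (hd x hx).differentiableAt (Ioi_mem_nhds hx)
    have h1 : HasDerivAt (fun x : ℝ => -(y^n * x^n)) (-(y^n * (n * x^(n-1)))) x :=
      (((hasDerivAt_pow n x).const_mul (y^n)).neg)
    have h2 := h1.exp
    have h3 := h2.mul hgd.hasDerivAt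
    refine h3.congr_deriv ?_
    simp only [hF']
    ring
  have hdlt : ∀ x ∈ Ioi (0:ℝ),
      Real.exp (-(y^n * x^n)) * deriv g x
        = x ^ (n-1) * Real.exp (-(y^n * x^n)) * deltaBar n g x := by
    intro x hx
    have hx0 : (x:ℝ) ^ (n-1) ≠ 0 := pow_ne_zero _ (ne_of_gt hx)
    simp only [deltaBar]
    field_simp [deltaBar]
  have hintA : IntegrableOn (fun x : ℝ => Real.exp (-(y^n * x^n)) * deriv g x) (Ioi 0) := by
    refine hint1.congr_fun (fun x hx => (hdlt x hx).symm) measurableSet_Ioi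
  have hF'int : IntegrableOn F' (Ioi 0) := hintA.sub (hint0.const_mul _)
  have hcont0 : ContinuousWithinAt F (Ici 0) 0 := by
    apply ContinuousWithinAt.mul _ (hc 0 self_mem_Ici)
    exact (Real.continuous_exp.comp (by continuity)).continuousWithinAt
  have htend : Tendsto F atTop (nhds 0) := by
    have hb : ∀ᶠ x in atTop, ‖F x‖ ≤ M * Real.exp ((α^n - y^n) * x^n) := by
      filter_upwards [hord, eventually_ge_atTop (0:ℝ)] with x hx hx0
      have : ‖F x‖ = Real.exp (-(y^n * x^n)) * |g x| := by
        rw [hF]; rw [Real.norm_eq_abs, abs_mul, abs_of_pos (Real.exp_pos _)]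
      rw [this]
      calc Real.exp (-(y^n * x^n)) * |g x| ≤ Real.exp (-(y^n * x^n)) * (M * Real.exp (α^n * x^n)) := by
            exact mul_le_mul_of_nonneg_left hx (Real.exp_pos _).le
        _ = M * Real.exp ((α^n - y^n) * x^n) := by
            rw [show Real.exp (-(y^n * x^n)) * (M * Real.exp (α^n * x^n))
                = M * Real.exp (α^n * x^n + -(y^n * x^n)) from by rw [Real.exp_add]; ring]
            ring_nf
    have hcneg : α^n - y^n < 0 := by
      have := pow_lt_pow_left₀ hy hα.le hn0
      linarith
    have h2 : Tendsto (fun x : ℝ => M * Real.exp ((α^n - y^n) * x^n)) atTop (nhds 0) := by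
      have hx : Tendsto (fun x : ℝ => (α^n - y^n) * x^n) atTop atBot :=
        (tendsto_pow_atTop hn0).const_mul_atTop_of_neg hcneg
      simpa using (Real.tendsto_exp_atBot.comp hx).const_mul M
    exact squeeze_zero_norm' hb h2
  have key := integral_Ioi_of_hasDerivAt_of_tendsto hcont0 hderiv hF'int htend
  have hF0 : F 0 = g 0 := by
    simp [hF, zero_pow hn0]
  rw [hF0] at key
  have hsplit : ∫ x in Ioi (0:ℝ), F' x
      = (∫ x in Ioi (0:ℝ), Real.exp (-(y^n * x^n)) * deriv g x)
        - (n * y^n) * ∫ x in Ioi (0:ℝ), x ^ (n-1) * Real.exp (-(y^n * x^n)) * g x := by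
    rw [integral_sub hintA (hint0.const_mul _), MeasureTheory.integral_const_mul]
  have e1 : ∫ x in Ioi (0:ℝ), Real.exp (-(y^n * x^n)) * deriv g x
      = ∫ x in Ioi (0:ℝ), x ^ (n-1) * Real.exp (-(x^n * y^n)) * deltaBar n g x := by
    refine setIntegral_congr_fun measurableSet_Ioi (fun x hx => ?_)
    rw [hdlt x hx, mul_comm (y^n) (x^n)]
  have e2 : ∫ x in Ioi (0:ℝ), x ^ (n-1) * Real.exp (-(y^n * x^n)) * g x
      = ∫ x in Ioi (0:ℝ), x ^ (n-1) * Real.exp (-(x^n * y^n)) * g x := by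
    refine setIntegral_congr_fun measurableSet_Ioi (fun x hx => ?_)
    rw [mul_comm (y^n) (x^n)]
  rw [hsplit, e1, e2] at key
  linarith

lemma aux_main (n : ℕ) (hn1 : 1 ≤ n) : ∀ K : ℕ, 1 ≤ K → ∀ (f : ℝ → ℝ) (α M y : ℝ),
    0 < α → α < y →
    (∀ j < K, ContinuousOn ((deltaBar n)^[j] f) (Ici 0)) →
    (∀ j < K, DifferentiableOn ℝ ((deltaBar n)^[j] f) (Ioi 0)) →
    (∀ j ≤ K, ∀ᶠ x in atTop, |((deltaBar n)^[j] f) x| ≤ M * Real.exp (α ^ n * x ^ n)) →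
    (∀ j ≤ K, IntegrableOn
        (fun x : ℝ => x ^ (n - 1) * Real.exp (-(y ^ n * x ^ n)) * ((deltaBar n)^[j] f) x)
        (Ioi 0)) →
    ∫ x in Ioi (0 : ℝ), x ^ (n - 1) * Real.exp (-(x ^ n * y ^ n)) * ((deltaBar n)^[K] f) x
        = (n * y ^ n) ^ K *
            (∫ x in Ioi (0 : ℝ), x ^ (n - 1) * Real.exp (-(x ^ n * y ^ n)) * f x)
          - ∑ j ∈ Finset.range K, (n * y ^ n) ^ (K - 1 - j) * ((deltaBar n)^[j] f) 0 := by
  refine Nat.le_induction ?_ ?_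
  · intro f α M y hα hy hc hd hord hint
    have h := step_lemma n hn1 f α M y hα hy
      (by simpa using hc 0 one_pos) (by simpa using hd 0 one_pos)
      (by simpa using hord 0 (by norm_num))
      (by simpa using hint 0 (by norm_num))
      (by simpa using hint 1 le_rfl)
    simpa [Finset.sum_range_one] using h
  · intro K hK IH f α M y hα hy hc hd hord hint
    have hg := step_lemma n hn1 ((deltaBar n)^[K] f) α M y hα hy
      (hc K (Nat.lt_succ_self K)) (hd K (Nat.lt_succ_self K))
      (hord K (Nat.le_succ K))
      (hint K (Nat.le_succ K))
      (by
        have := hint (K+1) le_rfl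
        simpa [Function.iterate_succ_apply'] using this)
    rw [Function.iterate_succ_apply']
    rw [hg]
    rw [IH f α M y hα hy (fun j hj => hc j (hj.trans (Nat.lt_succ_self K)))
      (fun j hj => hd j (hj.trans (Nat.lt_succ_self K)))
      (fun j hj => hord j (hj.trans (Nat.le_succ K)))
      (fun j hj => hint j (hj.trans (Nat.le_succ K)))]
    rw [Finset.sum_range_succ]
    have hexp : ∀ j ∈ Finset.range K,
        (↑n * y ^ n) ^ (K + 1 - 1 - j) * ((deltaBar n)^[j] f) 0
          = (↑n * y ^ n) * ((↑n * y ^ n) ^ (K - 1 - j) * ((deltaBar n)^[j] f) 0) := by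
      intro j hj
      have hj' : j < K := Finset.mem_range.mp hj
      have : K + 1 - 1 - j = (K - 1 - j) + 1 := by omega
      rw [this, pow_succ']
      ring
    rw [Finset.sum_congr rfl hexp, ← Finset.mul_sum]
    have : K + 1 - 1 - K = 0 := by omega
    rw [this, pow_succ']
    ring

/-- Theorem 2.1: for `n = 2^k` and `K ≥ 1`, if the iterated `δ̄`-derivatives
`δ̄⁰f = f, δ̄f, …, δ̄^{K-1}f` are continuous on `[0,∞)` and differentiable on `(0,∞)`,
each `δ̄ʲf` (`0 ≤ j ≤ K`) is of exponential order `exp(αⁿ xⁿ)` for some `α > 0`, and each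
`x ↦ x^{n-1} exp(-yⁿ xⁿ) (δ̄ʲf)(x)` is integrable on `(0,∞)` for `y > α`, then for `y > α`:
`Lₙ{δ̄ᴷ f; y} = (n yⁿ)ᴷ Lₙ{f; y} - ∑_{j=0}^{K-1} (n yⁿ)^{K-1-j} (δ̄ʲf)(0)`. -/
theorem Ln_deltaBar_iterate (k n K : ℕ) (hn : n = 2 ^ k) (hK : 1 ≤ K)
    (f : ℝ → ℝ) (α M : ℝ) (hα : 0 < α) (hM : 0 < M)
    (hc : ∀ j < K, ContinuousOn ((deltaBar n)^[j] f) (Ici 0))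
    (hd : ∀ j < K, DifferentiableOn ℝ ((deltaBar n)^[j] f) (Ioi 0))
    (hord : ∀ j ≤ K, ∀ᶠ x in atTop, |((deltaBar n)^[j] f) x| ≤ M * Real.exp (α ^ n * x ^ n))
    (hint : ∀ j ≤ K, ∀ y : ℝ, α < y →
      IntegrableOn
        (fun x : ℝ => x ^ (n - 1) * Real.exp (-(y ^ n * x ^ n)) * ((deltaBar n)^[j] f) x)
        (Ioi 0)) :
    ∀ y : ℝ, α < y →
      ∫ x in Ioi (0 : ℝ), x ^ (n - 1) * Real.exp (-(x ^ n * y ^ n)) * ((deltaBar n)^[K] f) x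
        = (n * y ^ n) ^ K *
            (∫ x in Ioi (0 : ℝ), x ^ (n - 1) * Real.exp (-(x ^ n * y ^ n)) * f x)
          - ∑ j ∈ Finset.range K, (n * y ^ n) ^ (K - 1 - j) * ((deltaBar n)^[j] f) 0 := by
  intro y hy
  exact aux_main n (by rw [hn]; exact Nat.one_le_two_pow) K hK f α M y hα hy hc hd hord
    (fun j hj => hint j hj y hy)
end

section
/- (Theorem 2.2) For n = 2^k with k ∈ ℕ and any positive integer K ≥ 1, let f : (0,∞) → ℝ be piecewise continuous and of exponential order exp(α^n x^n) as x → ∞ for some α > 0, and let F(y) = L_n{f; y} = ∫₀^∞ x^{n−1} exp(−x^n y^n) f(x) dx for y > α. Then for every y > α, L_n{x^{Kn} f(x); y} = ((−1)^K/n^K) (δ̄_y^K F)(y), i.e. ∫₀^∞ x^{Kn + n − 1} exp(−x^n y^n) f(x) dx = ((−1)^K/n^K) times the K-fold iterate of the operator F ↦ (y ↦ F′(y)/y^{n−1}) applied to F, evaluated at y. -/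
open MeasureTheory Set Filter

set_option maxHeartbeats 1000000 in
/-- Theorem 2.2: for `n = 2^k` and `K ≥ 1`, if `f` is piecewise continuous on `(0,∞)`
(formalized: measurable and bounded on bounded subintervals) and of exponential order
`exp(αⁿ xⁿ)` for some `α > 0`, and `F(y) = Lₙ{f; y}`, then for every `y > α`,
`Lₙ{x^{Kn} f(x); y} = ((-1)ᴷ/nᴷ) (δ̄_yᴷ F)(y)`, where `δ̄_y` is the operator
`F ↦ (y ↦ F'(y)/y^{n-1})`. -/
theorem Ln_mul_pow_iterate (k n K : ℕ) (hn : n = 2 ^ k) (hK : 1 ≤ K)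
    (f : ℝ → ℝ) (α M : ℝ) (hα : 0 < α) (hM : 0 < M)
    (hf : Measurable f)
    (hloc : ∀ b > (0 : ℝ), ∃ C : ℝ, ∀ x ∈ Ioc (0 : ℝ) b, |f x| ≤ C)
    (hord : ∀ᶠ x in atTop, |f x| ≤ M * Real.exp (α ^ n * x ^ n))
    (F : ℝ → ℝ)
    (hF : F = fun y => ∫ x in Ioi (0 : ℝ), x ^ (n - 1) * Real.exp (-(x ^ n * y ^ n)) * f x) :
    ∀ y : ℝ, α < y →
      ∫ x in Ioi (0 : ℝ), x ^ (K * n + n - 1) * Real.exp (-(x ^ n * y ^ n)) * f x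
        = ((-1 : ℝ) ^ K / n ^ K) *
            ((fun (G : ℝ → ℝ) => fun t => deriv G t / t ^ (n - 1))^[K] F) y := by
  have hn1 : 1 ≤ n := by rw [hn]; exact Nat.one_le_two_pow
  have hnR : (0 : ℝ) < (n : ℝ) := by exact_mod_cast hn1
  -- global exponential bound on f
  obtain ⟨b₀, hb₀⟩ : ∃ b₀ : ℝ, ∀ x ≥ b₀, |f x| ≤ M * Real.exp (α ^ n * x ^ n) :=
    eventually_atTop.mp hord
  set b₁ : ℝ := max b₀ 1 with hb₁def
  have hb₁pos : (0 : ℝ) < b₁ := lt_of_lt_of_le one_pos (le_max_right _ _)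
  obtain ⟨C, hC⟩ := hloc b₁ hb₁pos
  set A : ℝ := max C M with hAdef
  have hA0 : 0 < A := lt_of_lt_of_le hM (le_max_right _ _)
  have hA : ∀ x ∈ Ioi (0 : ℝ), |f x| ≤ A * Real.exp (α ^ n * x ^ n) := by
    intro x hx
    have hx0 : (0:ℝ) < x := hx
    have hexp1 : (1 : ℝ) ≤ Real.exp (α ^ n * x ^ n) := by
      apply Real.one_le_exp
      positivity
    rcases le_or_gt x b₁ with h | h
    · calc |f x| ≤ C := hC x ⟨hx, h⟩
        _ ≤ A := le_max_left _ _
        _ = A * 1 := (mul_one A).symm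
        _ ≤ A * Real.exp (α ^ n * x ^ n) := by gcongr
    · calc |f x| ≤ M * Real.exp (α ^ n * x ^ n) :=
          hb₀ x (le_trans (le_max_left _ _) h.le)
        _ ≤ A * Real.exp (α ^ n * x ^ n) := by gcongr; exact le_max_right _ _
  -- basic integrability
  have int1 : ∀ (m : ℕ) (d : ℝ), 0 < d →
      IntegrableOn (fun x : ℝ => x ^ m * Real.exp (-d * x ^ n)) (Ioi 0) := by
    intro m d hd
    have h := integrableOn_rpow_mul_exp_neg_mul_rpow (s := (m : ℝ)) (p := (n : ℝ))
      (by exact lt_of_lt_of_le neg_one_lt_zero (Nat.cast_nonneg m)) (by exact_mod_cast hn1) hd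
    apply h.congr_fun ?_ measurableSet_Ioi
    intro x hx
    simp only [Real.rpow_natCast]
  have key_int : ∀ (m : ℕ) (z : ℝ), α < z →
      IntegrableOn (fun x : ℝ => x ^ m * Real.exp (-(x ^ n * z ^ n)) * f x) (Ioi 0) := by
    intro m z hz
    have hzp : (0 : ℝ) < z := hα.trans hz
    have hd : 0 < z ^ n - α ^ n := by
      have := pow_lt_pow_left₀ hz hα.le (by omega : n ≠ 0)
      linarith
    apply Integrable.mono' ((int1 m _ hd).const_mul A)
    · apply Measurable.aestronglyMeasurable
      fun_prop
    · rw [ae_restrict_iff' measurableSet_Ioi]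
      refine ae_of_all _ ?_
      intro x hx
      rw [mem_Ioi] at hx
      have he : Real.exp (-(x ^ n * z ^ n)) * Real.exp (α ^ n * x ^ n)
          = Real.exp (-(z ^ n - α ^ n) * x ^ n) := by
        rw [← Real.exp_add]; congr 1; ring
      calc ‖x ^ m * Real.exp (-(x ^ n * z ^ n)) * f x‖
          = x ^ m * Real.exp (-(x ^ n * z ^ n)) * |f x| := by
            rw [Real.norm_eq_abs, abs_mul, abs_mul, abs_of_pos (pow_pos hx m),
              abs_of_pos (Real.exp_pos _)]
        _ ≤ x ^ m * Real.exp (-(x ^ n * z ^ n)) * (A * Real.exp (α ^ n * x ^ n)) := by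
            gcongr
            exact hA x hx
        _ = A * (x ^ m * Real.exp (-(z ^ n - α ^ n) * x ^ n)) := by
            rw [← he]; ring
  -- key derivative step
  have key_deriv : ∀ (m : ℕ) (z : ℝ), α < z →
      HasDerivAt (fun y : ℝ => ∫ x in Ioi (0 : ℝ), x ^ m * Real.exp (-(x ^ n * y ^ n)) * f x)
        (-((n : ℝ) * z ^ (n - 1)) *
          ∫ x in Ioi (0 : ℝ), x ^ (m + n) * Real.exp (-(x ^ n * z ^ n)) * f x) z := by
    intro m z hz
    have hzp : (0 : ℝ) < z := hα.trans hz
    set ε : ℝ := (z - α) / 2 with hεdef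
    have hε0 : 0 < ε := by rw [hεdef]; linarith
    set c : ℝ := (z + α) / 2 with hcdef
    have hαc : α < c := by rw [hcdef]; linarith
    have hc0 : (0 : ℝ) < c := hα.trans hαc
    have hcz : c = z - ε := by rw [hcdef, hεdef]; ring
    have hd : 0 < c ^ n - α ^ n := by
      have := pow_lt_pow_left₀ hαc hα.le (by omega : n ≠ 0)
      linarith
    set F' : ℝ → ℝ → ℝ := fun y x =>
      -((n : ℝ) * y ^ (n - 1)) * (x ^ (m + n) * Real.exp (-(x ^ n * y ^ n)) * f x) with hF'def
    set bnd : ℝ → ℝ := fun x =>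
      ((n : ℝ) * (z + ε) ^ (n - 1) * A) * (x ^ (m + n) * Real.exp (-(c ^ n - α ^ n) * x ^ n))
      with hbnddef
    have hmeas : ∀ᶠ (y : ℝ) in nhds z, AEStronglyMeasurable
        (fun x : ℝ => x ^ m * Real.exp (-(x ^ n * y ^ n)) * f x) (volume.restrict (Ioi 0)) :=
      Filter.Eventually.of_forall fun y => by apply Measurable.aestronglyMeasurable; fun_prop
    have hF'meas : AEStronglyMeasurable (F' z) (volume.restrict (Ioi 0)) := by
      apply Measurable.aestronglyMeasurable; rw [hF'def]; fun_prop
    have hbound : ∀ᵐ x ∂(volume.restrict (Ioi (0:ℝ))), ∀ y ∈ Metric.ball z ε,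
        ‖F' y x‖ ≤ bnd x := by
      rw [ae_restrict_iff' measurableSet_Ioi]
      refine ae_of_all _ ?_
      intro x hx y hy
      rw [mem_Ioi] at hx
      rw [Metric.mem_ball, Real.dist_eq, abs_lt] at hy
      have hcy : c < y := by rw [hcz]; linarith
      have hy0 : 0 < y := hc0.trans hcy
      have hyz : y ≤ z + ε := by linarith
      have he : Real.exp (-(x ^ n * c ^ n)) * Real.exp (α ^ n * x ^ n)
          = Real.exp (-(c ^ n - α ^ n) * x ^ n) := by
        rw [← Real.exp_add]; congr 1; ring
      have hnorm : ‖F' y x‖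
          = (n : ℝ) * y ^ (n - 1) * (x ^ (m + n) * Real.exp (-(x ^ n * y ^ n)) * |f x|) := by
        rw [hF'def]
        simp only [Real.norm_eq_abs, abs_mul, abs_neg, abs_pow, Real.abs_exp,
          abs_of_pos hx, abs_of_pos hy0, Nat.abs_cast]
      rw [hnorm, hbnddef]
      have hexple : Real.exp (-(x ^ n * y ^ n)) ≤ Real.exp (-(x ^ n * c ^ n)) := by
        apply Real.exp_le_exp.mpr
        have : c ^ n ≤ y ^ n := pow_le_pow_left₀ hc0.le hcy.le n
        nlinarith [pow_pos hx n]
      calc (n : ℝ) * y ^ (n - 1) * (x ^ (m + n) * Real.exp (-(x ^ n * y ^ n)) * |f x|)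
          ≤ (n : ℝ) * (z + ε) ^ (n - 1) *
            (x ^ (m + n) * Real.exp (-(x ^ n * c ^ n)) * (A * Real.exp (α ^ n * x ^ n))) := by
            gcongr <;> first | exact hy0.le | exact hA x hx | positivity
        _ = (n : ℝ) * (z + ε) ^ (n - 1) * A *
            (x ^ (m + n) * Real.exp (-(c ^ n - α ^ n) * x ^ n)) := by
            rw [← he]; ring
    have hdiff : ∀ᵐ x ∂(volume.restrict (Ioi (0:ℝ))), ∀ y ∈ Metric.ball z ε,
        HasDerivAt (fun y : ℝ => x ^ m * Real.exp (-(x ^ n * y ^ n)) * f x) (F' y x) y := by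
      refine ae_of_all _ ?_
      intro x y _
      have h1 : HasDerivAt (fun y : ℝ => x ^ n * y ^ n) (x ^ n * ((n : ℝ) * y ^ (n - 1))) y :=
        (hasDerivAt_pow n y).const_mul (x ^ n)
      have h2 := h1.neg.exp
      have h3 := (h2.const_mul (x ^ m)).mul_const (f x)
      refine h3.congr_deriv ?_
      rw [hF'def]
      simp only [pow_add, Pi.neg_apply]
      ring
    have main := hasDerivAt_integral_of_dominated_loc_of_deriv_le
      (F := fun (y : ℝ) (x : ℝ) => x ^ m * Real.exp (-(x ^ n * y ^ n)) * f x) (F' := F')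
      (bound := bnd) (Metric.ball_mem_nhds z hε0) hmeas (key_int m z hz) hF'meas hbound
      ((int1 (m + n) _ hd).const_mul _) hdiff
    have hres := main.2
    have hval : (∫ x in Ioi (0 : ℝ), F' z x)
        = -((n : ℝ) * z ^ (n - 1)) *
          ∫ x in Ioi (0 : ℝ), x ^ (m + n) * Real.exp (-(x ^ n * z ^ n)) * f x := by
      rw [hF'def]
      exact integral_const_mul _ _
    rwa [hval] at hres
  -- iteration
  have hiter : ∀ (j : ℕ) (z : ℝ), α < z →
      ((fun (G : ℝ → ℝ) => fun t => deriv G t / t ^ (n - 1))^[j] F) z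
        = (-(n : ℝ)) ^ j *
          ∫ x in Ioi (0 : ℝ), x ^ (j * n + n - 1) * Real.exp (-(x ^ n * z ^ n)) * f x := by
    intro j
    induction j with
    | zero =>
      intro z hz
      simp [hF]
    | succ j ih =>
      intro z hz
      have hz0 : (0 : ℝ) < z := hα.trans hz
      rw [Function.iterate_succ_apply']
      have hEq : (fun (G : ℝ → ℝ) => fun t => deriv G t / t ^ (n - 1))^[j] F
          =ᶠ[nhds z] fun w => (-(n : ℝ)) ^ j *
            ∫ x in Ioi (0 : ℝ), x ^ (j * n + n - 1) * Real.exp (-(x ^ n * w ^ n)) * f x :=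
        Filter.eventuallyEq_of_mem (Ioi_mem_nhds hz) fun w hw => ih w hw
      have hd := (key_deriv (j * n + n - 1) z hz).const_mul ((-(n : ℝ)) ^ j)
      have hder : deriv ((fun (G : ℝ → ℝ) => fun t => deriv G t / t ^ (n - 1))^[j] F) z
          = (-(n : ℝ)) ^ j * (-((n : ℝ) * z ^ (n - 1)) *
            ∫ x in Ioi (0 : ℝ), x ^ ((j * n + n - 1) + n) * Real.exp (-(x ^ n * z ^ n)) * f x) := by
        rw [hEq.deriv_eq]
        exact hd.deriv
      show deriv ((fun (G : ℝ → ℝ) => fun t => deriv G t / t ^ (n - 1))^[j] F) z / z ^ (n - 1)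
          = _
      rw [hder]
      have hexp : (j * n + n - 1) + n = (j + 1) * n + n - 1 := by
        rw [add_mul, one_mul]; omega
      rw [hexp]
      have hzn : z ^ (n - 1) ≠ 0 := (pow_pos hz0 (n - 1)).ne'
      rw [pow_succ]
      field_simp
      ring_nf
      simp only [mul_comm (z ^ n) (_ ^ n)]
  intro y hy
  rw [hiter K y hy]
  have h1 : ((-1 : ℝ) ^ K / (n : ℝ) ^ K) * (-(n : ℝ)) ^ K = 1 := by
    have hn0 : ((n : ℝ)) ^ K ≠ 0 := by positivity
    rw [neg_pow]
    field_simp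
    rw [← mul_pow]
    norm_num
    rw [← mul_pow]
    norm_num
  rw [← mul_assoc, h1, one_mul]
end

section
/- For n = 2^k with k ∈ ℕ, any a > 0, and any y > 0, one has ∫₀^∞ x^{n−1} exp(−x^n y^n) · (n/a^n) sin(a^n x^n) dx = 1/(y^{2n} + a^{2n}); equivalently, the function x ↦ (n/a^n) sin(a^n x^n) is the inverse L_n-transform of y ↦ 1/(y^{2n} + a^{2n}). -/
open MeasureTheory Set Filter

lemma exp_sin_integrable (b c : ℝ) (hb : 0 < b) :
    IntegrableOn (fun u : ℝ => Real.exp (-(b * u)) * Real.sin (c * u)) (Ioi 0) := by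
  have h : IntegrableOn (fun u : ℝ => Real.exp (-b * u)) (Ioi 0) :=
    exp_neg_integrableOn_Ioi 0 hb
  refine h.mono' ?_ ?_
  · exact (((Real.continuous_exp.comp (continuous_const.mul continuous_id).neg).mul
      (Real.continuous_sin.comp (continuous_const.mul continuous_id)))).aestronglyMeasurable
  · filter_upwards with u
    rw [norm_mul, Real.norm_eq_abs, Real.norm_eq_abs, Real.abs_exp, neg_mul]
    calc Real.exp (-(b*u)) * |Real.sin (c*u)| ≤ Real.exp (-(b*u)) * 1 :=
          mul_le_mul_of_nonneg_left
            (abs_le.mpr ⟨Real.neg_one_le_sin _, Real.sin_le_one _⟩) (Real.exp_pos _).le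
      _ = Real.exp (-(b*u)) := mul_one _

lemma exp_sin_integral (b c : ℝ) (hb : 0 < b) :
    ∫ u in Ioi (0:ℝ), Real.exp (-(b * u)) * Real.sin (c * u) = c / (b ^ 2 + c ^ 2) := by
  have hd : 0 < b ^ 2 + c ^ 2 := by positivity
  set F : ℝ → ℝ := fun u =>
    -(Real.exp (-(b * u)) * (b * Real.sin (c * u) + c * Real.cos (c * u))) / (b ^ 2 + c ^ 2) with hF
  have h1 : Tendsto (fun u : ℝ => Real.exp (-(b * u))) atTop (nhds 0) := by
    apply Real.tendsto_exp_atBot.comp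
    exact tendsto_neg_atBot_iff.mpr (Tendsto.const_mul_atTop hb tendsto_id)
  have hderiv : ∀ u : ℝ, HasDerivAt F (Real.exp (-(b * u)) * Real.sin (c * u)) u := by
    intro u
    have he : HasDerivAt (fun u : ℝ => Real.exp (-(b * u))) (-b * Real.exp (-(b * u))) u := by
      have := (Real.hasDerivAt_exp (-(b * u))).comp u (((hasDerivAt_id u).const_mul b).neg)
      simpa [mul_comm, Function.comp_def, Pi.neg_apply] using this
    have hs : HasDerivAt (fun u : ℝ => Real.sin (c * u)) (Real.cos (c * u) * c) u := by
      simpa [Function.comp_def] using (Real.hasDerivAt_sin (c * u)).comp u ((hasDerivAt_id u).const_mul c)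
    have hc : HasDerivAt (fun u : ℝ => Real.cos (c * u)) (-Real.sin (c * u) * c) u := by
      simpa [Function.comp_def] using (Real.hasDerivAt_cos (c * u)).comp u ((hasDerivAt_id u).const_mul c)
    have h2 := (hs.const_mul b).add (hc.const_mul c)
    have := ((he.mul h2).neg).div_const (b ^ 2 + c ^ 2)
    refine this.congr_deriv ?_
    rw [div_eq_iff hd.ne', Pi.add_apply]
    ring
  have htop : Tendsto F atTop (nhds 0) := by
    apply squeeze_zero_norm (a := fun u => Real.exp (-(b * u)) * ((|b| + |c|) / (b ^ 2 + c ^ 2)))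
    · intro u
      rw [hF]
      simp only [Real.norm_eq_abs, abs_div, abs_neg, abs_mul, Real.abs_exp,
        abs_of_pos hd]
      rw [div_le_iff₀ hd, mul_assoc, div_mul_cancel₀ _ hd.ne']
      refine mul_le_mul_of_nonneg_left ?_ (Real.exp_pos _).le
      calc |b * Real.sin (c*u) + c * Real.cos (c*u)|
          ≤ |b * Real.sin (c*u)| + |c * Real.cos (c*u)| := abs_add_le _ _
        _ ≤ |b| * 1 + |c| * 1 := by
            rw [abs_mul, abs_mul]
            gcongr
            · exact abs_le.mpr ⟨Real.neg_one_le_sin _, Real.sin_le_one _⟩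
            · exact abs_le.mpr ⟨Real.neg_one_le_cos _, Real.cos_le_one _⟩
        _ = |b| + |c| := by ring
    · simpa using h1.mul_const ((|b| + |c|) / (b ^ 2 + c ^ 2))
  have := integral_Ioi_of_hasDerivAt_of_tendsto
    (f := F) (f' := fun u => Real.exp (-(b * u)) * Real.sin (c * u)) (a := 0) (m := 0)
    (hderiv 0).continuousAt.continuousWithinAt (fun x _ => hderiv x)
    (exp_sin_integrable b c hb) htop
  rw [this, hF]
  simp
  ring

/-- For `n = 2^k`, `a > 0` and `y > 0`, the function `x ↦ (n/aⁿ) sin(aⁿ xⁿ)` is the inverse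
`Lₙ`-transform of `y ↦ 1/(y^{2n} + a^{2n})`:
`Lₙ{(n/aⁿ) sin(aⁿ xⁿ); y} = 1/(y^{2n} + a^{2n})`. -/
theorem Ln_inv_sin (k n : ℕ) (hn : n = 2 ^ k) (a y : ℝ) (ha : 0 < a) (hy : 0 < y) :
    ∫ x in Ioi (0 : ℝ),
        x ^ (n - 1) * Real.exp (-(x ^ n * y ^ n)) * ((n / a ^ n) * Real.sin (a ^ n * x ^ n))
      = 1 / (y ^ (2 * n) + a ^ (2 * n)) := by
  have hn1 : 1 ≤ n := hn ▸ Nat.one_le_two_pow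
  have hnR : (0:ℝ) < (n:ℝ) := by exact_mod_cast Nat.lt_of_lt_of_le Nat.zero_lt_one hn1
  have han : (0:ℝ) < a ^ n := pow_pos ha n
  have hyn : (0:ℝ) < y ^ n := pow_pos hy n
  calc ∫ x in Ioi (0 : ℝ),
        x ^ (n - 1) * Real.exp (-(x ^ n * y ^ n)) * ((n / a ^ n) * Real.sin (a ^ n * x ^ n))
      = ∫ x in Ioi (0:ℝ), (1 / a ^ n) * ((|(n:ℝ)| * x ^ ((n:ℝ) - 1)) •
          (fun u => Real.exp (-(y ^ n * u)) * Real.sin (a ^ n * u)) (x ^ (n:ℝ))) := by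
        refine setIntegral_congr_fun measurableSet_Ioi (fun x hx => ?_)
        have hx0 : (0:ℝ) < x := hx
        have h1 : x ^ ((n:ℝ) : ℝ) = x ^ n := Real.rpow_natCast x n
        have h2 : x ^ ((n:ℝ) - 1) = x ^ (n - 1) := by
          rw [show ((n:ℝ) - 1) = ((n - 1 : ℕ) : ℝ) by
            rw [Nat.cast_sub hn1]; norm_num]
          exact Real.rpow_natCast x (n - 1)
        simp only [h1, h2, smul_eq_mul, abs_of_pos hnR]
        rw [mul_comm (x ^ n) (y ^ n)]
        ring
    _ = (1 / a ^ n) * ∫ x in Ioi (0:ℝ), ((|(n:ℝ)| * x ^ ((n:ℝ) - 1)) •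
          (fun u => Real.exp (-(y ^ n * u)) * Real.sin (a ^ n * u)) (x ^ (n:ℝ))) :=
        integral_const_mul _ _
    _ = (1 / a ^ n) * (a ^ n / ((y ^ n) ^ 2 + (a ^ n) ^ 2)) := by
        rw [integral_comp_rpow_Ioi (fun u => Real.exp (-(y ^ n * u)) * Real.sin (a ^ n * u)) hnR.ne',
          exp_sin_integral _ _ hyn]
    _ = 1 / (y ^ (2 * n) + a ^ (2 * n)) := by
        rw [pow_mul', pow_mul']
        field_simp
end

section
/- For n = 2^k with k ∈ ℕ, any a > 0, and any y > 0, defining the δ̄-derivative with respect to y as (δ̄_y F)(y) = (1/y^{n−1}) F′(y), the L_n-transform F(y) = ∫₀^∞ x^{n−1} exp(−x^n y^n) f(x) dx of any piecewise continuous f of exponential order exp(α^n x^n) (α > 0) is differentiable on (α, ∞) and satisfies (δ̄_y F)(y) = −n ∫₀^∞ x^{2n−1} exp(−x^n y^n) f(x) dx for all y > α. -/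
open MeasureTheory Set Filter

set_option maxHeartbeats 1000000

lemma aux_integrable_s19 (n m : ℕ) (hn : 1 ≤ n) (f : ℝ → ℝ) (α M : ℝ) (hα : 0 < α) (hM : 0 < M)
    (hf : Measurable f)
    (hloc : ∀ b > (0 : ℝ), ∃ C : ℝ, ∀ x ∈ Ioc (0 : ℝ) b, |f x| ≤ C)
    (hord : ∀ᶠ x in atTop, |f x| ≤ M * Real.exp (α ^ n * x ^ n))
    (c : ℝ) (hc : α < c) :
    IntegrableOn (fun x => x ^ m * Real.exp (-(x ^ n * c ^ n)) * f x) (Ioi (0 : ℝ)) := by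
  have hc0 : 0 < c := hα.trans hc
  rw [eventually_atTop] at hord
  obtain ⟨b₀, hb₀⟩ := hord
  set b : ℝ := max b₀ 1 with hb
  have hb1 : (1 : ℝ) ≤ b := le_max_right _ _
  have hbpos : (0 : ℝ) < b := lt_of_lt_of_le one_pos hb1
  have hmeas : Measurable (fun x : ℝ => x ^ m * Real.exp (-(x ^ n * c ^ n)) * f x) := by
    exact (((measurable_id.pow_const m).mul
      (((measurable_id.pow_const n).mul_const _).neg.exp)).mul hf)
  rw [← Ioc_union_Ioi_eq_Ioi hbpos.le]
  apply IntegrableOn.union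
  · obtain ⟨C, hC⟩ := hloc b hbpos
    apply Measure.integrableOn_of_bounded (M := b ^ m * max C 0)
    · exact ((measure_Ioc_lt_top).ne)
    · exact hmeas.aestronglyMeasurable
    · filter_upwards [ae_restrict_mem measurableSet_Ioc] with x hx
      have hx0 : 0 < x := hx.1
      have h1 : Real.exp (-(x ^ n * c ^ n)) ≤ 1 := by
        apply Real.exp_le_one_iff.2
        have : 0 ≤ x ^ n * c ^ n := by positivity
        linarith
      have h2 : |f x| ≤ max C 0 := le_trans (hC x hx) (le_max_left _ _)
      have h3 : x ^ m ≤ b ^ m := pow_le_pow_left₀ hx0.le hx.2 m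
      calc ‖x ^ m * Real.exp (-(x ^ n * c ^ n)) * f x‖
          = x ^ m * Real.exp (-(x ^ n * c ^ n)) * |f x| := by
            rw [Real.norm_eq_abs, abs_mul, abs_mul, abs_of_pos (by positivity : (0:ℝ) < x ^ m),
              abs_of_pos (Real.exp_pos _)]
        _ ≤ b ^ m * 1 * max C 0 := by
            apply mul_le_mul (mul_le_mul h3 h1 (Real.exp_pos _).le (by positivity)) h2
              (abs_nonneg _) (by positivity)
        _ = b ^ m * max C 0 := by ring
  · set δ : ℝ := c ^ n - α ^ n with hδdef
    have hδ : 0 < δ := by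
      have := pow_lt_pow_left₀ hc hα.le (by omega : n ≠ 0)
      simp only [hδdef]; linarith
    have hint : IntegrableOn (fun x : ℝ => x ^ (m : ℝ) * Real.exp (-δ * x ^ (n : ℝ))) (Ioi 0) :=
      integrableOn_rpow_mul_exp_neg_mul_rpow
        (lt_of_lt_of_le (by norm_num) (Nat.cast_nonneg m)) (by exact_mod_cast hn) hδ
    have hint2 : IntegrableOn (fun x : ℝ => M * (x ^ m * Real.exp (-δ * x ^ n))) (Ioi b) := by
      apply Integrable.const_mul
      apply IntegrableOn.mono_set _ (Ioi_subset_Ioi hbpos.le)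
      simp only [Real.rpow_natCast] at hint
      exact hint
    apply Integrable.mono' hint2 hmeas.aestronglyMeasurable
    filter_upwards [ae_restrict_mem measurableSet_Ioi] with x hx
    have hxb : b < x := hx
    have hx0 : 0 < x := lt_of_lt_of_le hbpos hxb.le
    have h1 : |f x| ≤ M * Real.exp (α ^ n * x ^ n) := hb₀ x ((le_max_left _ _).trans hxb.le)
    calc ‖x ^ m * Real.exp (-(x ^ n * c ^ n)) * f x‖
        = x ^ m * Real.exp (-(x ^ n * c ^ n)) * |f x| := by
          rw [Real.norm_eq_abs, abs_mul, abs_mul, abs_of_pos (by positivity : (0:ℝ) < x ^ m),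
            abs_of_pos (Real.exp_pos _)]
      _ ≤ x ^ m * Real.exp (-(x ^ n * c ^ n)) * (M * Real.exp (α ^ n * x ^ n)) := by
          apply mul_le_mul_of_nonneg_left h1 (by positivity)
      _ = M * (x ^ m * Real.exp (-δ * x ^ n)) := by
          rw [show (-δ * x ^ n : ℝ) = -(x ^ n * c ^ n) + α ^ n * x ^ n by ring, Real.exp_add]
          ring

/-- For `n = 2^k`, if `f` is piecewise continuous on `(0,∞)` (formalized: measurable and
bounded on bounded subintervals) and of exponential order `exp(αⁿ xⁿ)` for some `α > 0`,
then its `Lₙ`-transform `F(y) = ∫₀^∞ x^{n-1} exp(-xⁿ yⁿ) f(x) dx` is differentiable on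
`(α,∞)` and satisfies `(δ̄_y F)(y) = (1/y^{n-1}) F'(y) = -n ∫₀^∞ x^{2n-1} exp(-xⁿ yⁿ) f(x) dx`
for all `y > α`. -/
theorem Ln_deriv (k n : ℕ) (hn : n = 2 ^ k) (a : ℝ) (ha : 0 < a)
    (f : ℝ → ℝ) (α M : ℝ) (hα : 0 < α) (hM : 0 < M)
    (hf : Measurable f)
    (hloc : ∀ b > (0 : ℝ), ∃ C : ℝ, ∀ x ∈ Ioc (0 : ℝ) b, |f x| ≤ C)
    (hord : ∀ᶠ x in atTop, |f x| ≤ M * Real.exp (α ^ n * x ^ n))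
    (F : ℝ → ℝ)
    (hF : F = fun y => ∫ x in Ioi (0 : ℝ), x ^ (n - 1) * Real.exp (-(x ^ n * y ^ n)) * f x) :
    (∀ y ∈ Ioi α, DifferentiableAt ℝ F y) ∧
      ∀ y : ℝ, α < y →
        (1 / y ^ (n - 1)) * deriv F y
          = -n * ∫ x in Ioi (0 : ℝ), x ^ (2 * n - 1) * Real.exp (-(x ^ n * y ^ n)) * f x := by
  subst hF
  have hn1 : 1 ≤ n := hn ▸ Nat.one_le_two_pow
  have key : ∀ y : ℝ, α < y →
      HasDerivAt (fun y => ∫ x in Ioi (0 : ℝ), x ^ (n - 1) * Real.exp (-(x ^ n * y ^ n)) * f x)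
        (-(n : ℝ) * y ^ (n - 1) *
          ∫ x in Ioi (0 : ℝ), x ^ (2 * n - 1) * Real.exp (-(x ^ n * y ^ n)) * f x) y := by
    intro y₀ hy₀
    have hy0pos : 0 < y₀ := hα.trans hy₀
    set ε : ℝ := (y₀ - α) / 2 with hεdef
    have hε : 0 < ε := by simp only [hεdef]; linarith
    set c : ℝ := (α + y₀) / 2 with hcdef
    have hαc : α < c := by simp only [hcdef]; linarith
    have hc0 : 0 < c := hα.trans hαc
    set B : ℝ := y₀ + ε with hBdef
    have hball : ∀ y ∈ Metric.ball y₀ ε, c < y ∧ y < B := by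
      intro y hy
      rw [Metric.mem_ball, Real.dist_eq, abs_sub_lt_iff] at hy
      constructor
      · simp only [hcdef, hεdef] at *; linarith [hy.2]
      · simp only [hBdef] at *; linarith [hy.1]
    have hmeasF : ∀ y : ℝ, AEStronglyMeasurable
        (fun x : ℝ => x ^ (n - 1) * Real.exp (-(x ^ n * y ^ n)) * f x)
        (volume.restrict (Ioi (0 : ℝ))) := fun y =>
      (((measurable_id.pow_const _).mul
        (((measurable_id.pow_const n).mul_const _).neg.exp)).mul hf).aestronglyMeasurable
    have hx2 : ∀ x : ℝ, x ^ (2 * n - 1) = x ^ (n - 1) * x ^ n := by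
      intro x
      rw [← pow_add]
      congr 1
      omega
    have hbound : ∀ᵐ x ∂(volume.restrict (Ioi (0:ℝ))), ∀ y ∈ Metric.ball y₀ ε,
        ‖-(n : ℝ) * y ^ (n - 1) * (x ^ (2 * n - 1) * Real.exp (-(x ^ n * y ^ n)) * f x)‖ ≤
          ((n : ℝ) * B ^ (n - 1)) * (x ^ (2 * n - 1) * Real.exp (-(x ^ n * c ^ n)) * |f x|) := by
      filter_upwards [ae_restrict_mem measurableSet_Ioi] with x hx
      intro y hy
      have hx0 : (0 : ℝ) < x := hx
      obtain ⟨hcy, hyB⟩ := hball y hy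
      have hy0 : 0 < y := hc0.trans hcy
      have hexp : Real.exp (-(x ^ n * y ^ n)) ≤ Real.exp (-(x ^ n * c ^ n)) := by
        apply Real.exp_le_exp.2
        apply neg_le_neg
        apply mul_le_mul_of_nonneg_left (pow_le_pow_left₀ hc0.le hcy.le n) (by positivity)
      have hyBpow : y ^ (n - 1) ≤ B ^ (n - 1) := pow_le_pow_left₀ hy0.le hyB.le _
      calc ‖-(n : ℝ) * y ^ (n - 1) * (x ^ (2 * n - 1) * Real.exp (-(x ^ n * y ^ n)) * f x)‖
          = (n : ℝ) * y ^ (n - 1) *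
            (x ^ (2 * n - 1) * Real.exp (-(x ^ n * y ^ n)) * |f x|) := by
            rw [Real.norm_eq_abs, abs_mul, abs_mul, abs_mul, abs_mul, abs_neg, Nat.abs_cast,
              abs_of_pos (by positivity : (0:ℝ) < y ^ (n-1)),
              abs_of_pos (by positivity : (0:ℝ) < x ^ (2*n-1)),
              abs_of_pos (Real.exp_pos _)]
        _ ≤ (n : ℝ) * B ^ (n - 1) *
            (x ^ (2 * n - 1) * Real.exp (-(x ^ n * c ^ n)) * |f x|) := by
            apply mul_le_mul
            · exact mul_le_mul_of_nonneg_left hyBpow (by positivity)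
            · apply mul_le_mul_of_nonneg_right
                (mul_le_mul_of_nonneg_left hexp (by positivity)) (abs_nonneg _)
            · positivity
            · positivity
    have hbint : Integrable (fun x => ((n : ℝ) * B ^ (n - 1)) *
        (x ^ (2 * n - 1) * Real.exp (-(x ^ n * c ^ n)) * |f x|))
        (volume.restrict (Ioi (0:ℝ))) :=
      (aux_integrable_s19 n (2 * n - 1) hn1 (fun x => |f x|) α M hα hM hf.abs
        (fun b hb => by
          obtain ⟨C, hC⟩ := hloc b hb
          exact ⟨C, fun x hx => by simpa using hC x hx⟩)
        (hord.mono fun x hx => by simpa using hx) c hαc).const_mul _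
    have hdiff : ∀ᵐ x ∂(volume.restrict (Ioi (0:ℝ))), ∀ y ∈ Metric.ball y₀ ε,
        HasDerivAt (fun y => x ^ (n - 1) * Real.exp (-(x ^ n * y ^ n)) * f x)
          (-(n : ℝ) * y ^ (n - 1) *
            (x ^ (2 * n - 1) * Real.exp (-(x ^ n * y ^ n)) * f x)) y := by
      apply Eventually.of_forall
      intro x y hy
      have h1 : HasDerivAt (fun y : ℝ => Real.exp (-(x ^ n * y ^ n)))
          (Real.exp (-(x ^ n * y ^ n)) * -(x ^ n * ((n : ℝ) * y ^ (n - 1)))) y :=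
        (((hasDerivAt_pow n y).const_mul (x ^ n)).neg).exp
      have h2 := (h1.const_mul (x ^ (n - 1))).mul_const (f x)
      refine h2.congr_deriv ?_
      rw [hx2 x]
      ring
    obtain ⟨-, hderiv⟩ := hasDerivAt_integral_of_dominated_loc_of_deriv_le
      (F := fun y x => x ^ (n - 1) * Real.exp (-(x ^ n * y ^ n)) * f x)
      (F' := fun y x => -(n : ℝ) * y ^ (n - 1) *
        (x ^ (2 * n - 1) * Real.exp (-(x ^ n * y ^ n)) * f x))
      (bound := fun x => ((n : ℝ) * B ^ (n - 1)) *
        (x ^ (2 * n - 1) * Real.exp (-(x ^ n * c ^ n)) * |f x|))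
      (Metric.ball_mem_nhds y₀ hε) (Eventually.of_forall hmeasF)
      (aux_integrable_s19 n (n - 1) hn1 f α M hα hM hf hloc hord y₀ hy₀)
      (((((measurable_id.pow_const _).mul
          (((measurable_id.pow_const n).mul_const _).neg.exp)).mul hf).const_mul
            (-(n : ℝ) * y₀ ^ (n - 1))).aestronglyMeasurable)
      hbound hbint hdiff
    rw [MeasureTheory.integral_const_mul] at hderiv
    exact hderiv
  constructor
  · exact fun y hy => (key y hy).differentiableAt
  · intro y hy
    rw [(key y hy).deriv]
    have hy0 : (0 : ℝ) < y := hα.trans hy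
    have hyne : y ^ (n - 1) ≠ 0 := pow_ne_zero _ hy0.ne'
    field_simp
    have hcomm : ∀ x : ℝ, y ^ n * x ^ n = x ^ n * y ^ n := fun x => mul_comm _ _
    simp only [hcomm]
end
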